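/- arXiv:2402.08773 — 8 statements merged into one kernel-verified Lean document; each statement's English description precedes it below -/
import Mathlib

section
/- Let d ≥ 1 be an integer and let f be a smooth real-valued function on T = [0,1]. Suppose that for parameters C* > 0, N > 0 and S > 0 one has ∫₀¹ (f^{(k)}(x))² dx ≤ (C*·N)^{2k}·S for both k = d−1 and k = d. Let 0 ≤ x₁ < x₂ < ⋯ < x_M ≤ 1 be points such that x_{i+1} − x_i ≥ δ for all i, with δ/2 ≤ x₁ and x_M ≤ 1 − δ/2. Then Σ_{i=1}^M (f^{(d−1)}(x_i))² ≤ (C*·N + δ^{−1})·(C*·N)^{2(d−1)}·S. -/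
open intervalIntegral MeasureTheory

private lemma rls_min (g : ℝ → ℝ) (hg : Continuous g) (a c : ℝ) (hac : a < c) :
    ∃ y ∈ Set.Icc a c, g y ^ 2 * (c - a) ≤ ∫ t in a..c, g t ^ 2 := by
  obtain ⟨y, hy, hmin⟩ := isCompact_Icc.exists_isMinOn (Set.nonempty_Icc.2 hac.le)
    ((hg.pow 2).continuousOn (s := Set.Icc a c))
  refine ⟨y, hy, ?_⟩
  have : ∫ t in a..c, g y ^ 2 ≤ ∫ t in a..c, g t ^ 2 := by
    apply intervalIntegral.integral_mono_on hac.le (by simp) ((hg.pow 2).intervalIntegrable a c)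
    intro t ht; exact hmin ht
  simpa [mul_comm] using this

private lemma rls_ftc (g G : ℝ → ℝ) (hg : ∀ t, HasDerivAt g (G t) t)
    (hgc : Continuous g) (hGc : Continuous G) (y c : ℝ) :
    g c ^ 2 - g y ^ 2 = ∫ t in y..c, 2 * g t * G t := by
  refine (intervalIntegral.integral_eq_sub_of_hasDerivAt (f := fun t => g t ^ 2)
    (f' := fun t => 2 * g t * G t) (fun t _ => ?_)
    (((continuous_const.mul hgc).mul hGc).intervalIntegrable y c)).symm
  simpa [pow_one] using (hg t).fun_pow 2

private lemma rls_half_left (g G : ℝ → ℝ) (hg : ∀ t, HasDerivAt g (G t) t)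
    (hgc : Continuous g) (hGc : Continuous G) (a c : ℝ) (hac : a < c) :
    g c ^ 2 ≤ (c - a)⁻¹ * (∫ t in a..c, g t ^ 2) + ∫ t in a..c, |2 * g t * G t| := by
  obtain ⟨y, hy, hmin⟩ := rls_min g hgc a c hac
  have hftc := rls_ftc g G hg hgc hGc y c
  have habs : (∫ t in y..c, 2 * g t * G t) ≤ ∫ t in y..c, |2 * g t * G t| := by
    calc (∫ t in y..c, 2 * g t * G t) ≤ |∫ t in y..c, 2 * g t * G t| := le_abs_self _
    _ ≤ ∫ t in y..c, |2 * g t * G t| :=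
        intervalIntegral.abs_integral_le_integral_abs hy.2
  have hmono : (∫ t in y..c, |2 * g t * G t|) ≤ ∫ t in a..c, |2 * g t * G t| := by
    apply intervalIntegral.integral_mono_interval hy.1 hy.2 le_rfl
      (ae_of_all _ fun t => abs_nonneg _)
      (((continuous_const.mul hgc).mul hGc).abs.intervalIntegrable a c)
  have hca : (0:ℝ) < c - a := by linarith
  have hinv : (c - a) * (c - a)⁻¹ = 1 := mul_inv_cancel₀ (ne_of_gt hca)
  have h2 : g y ^ 2 ≤ (c - a)⁻¹ * ∫ t in a..c, g t ^ 2 := by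
    nlinarith [hmin, inv_pos.2 hca]
  linarith

private lemma rls_half_right (g G : ℝ → ℝ) (hg : ∀ t, HasDerivAt g (G t) t)
    (hgc : Continuous g) (hGc : Continuous G) (c b : ℝ) (hcb : c < b) :
    g c ^ 2 ≤ (b - c)⁻¹ * (∫ t in c..b, g t ^ 2) + ∫ t in c..b, |2 * g t * G t| := by
  obtain ⟨y, hy, hmin⟩ := rls_min g hgc c b hcb
  have hftc := rls_ftc g G hg hgc hGc c y
  have habs : -(∫ t in c..y, 2 * g t * G t) ≤ ∫ t in c..y, |2 * g t * G t| := by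
    calc -(∫ t in c..y, 2 * g t * G t) ≤ |∫ t in c..y, 2 * g t * G t| := neg_le_abs _
    _ ≤ ∫ t in c..y, |2 * g t * G t| :=
        intervalIntegral.abs_integral_le_integral_abs hy.1
  have hmono : (∫ t in c..y, |2 * g t * G t|) ≤ ∫ t in c..b, |2 * g t * G t| := by
    apply intervalIntegral.integral_mono_interval le_rfl hy.1 hy.2
      (ae_of_all _ fun t => abs_nonneg _)
      (((continuous_const.mul hgc).mul hGc).abs.intervalIntegrable c b)
  have hca : (0:ℝ) < b - c := by linarith
  have hinv : (b - c) * (b - c)⁻¹ = 1 := mul_inv_cancel₀ (ne_of_gt hca)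
  have h2 : g y ^ 2 ≤ (b - c)⁻¹ * ∫ t in c..b, g t ^ 2 := by
    nlinarith [hmin, inv_pos.2 hca]
  linarith

private lemma rls_point (g G : ℝ → ℝ) (hg : ∀ t, HasDerivAt g (G t) t)
    (hgc : Continuous g) (hGc : Continuous G) (δ c : ℝ) (hδ : 0 < δ) :
    g c ^ 2 ≤ ∫ t in (c - δ/2)..(c + δ/2), (δ⁻¹ * g t ^ 2 + |g t * G t|) := by
  have h1 := rls_half_left g G hg hgc hGc (c - δ/2) c (by linarith)
  have h2 := rls_half_right g G hg hgc hGc c (c + δ/2) (by linarith)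
  rw [show c - (c - δ/2) = δ/2 by ring] at h1
  rw [show c + δ/2 - c = δ/2 by ring] at h2
  have cont1 : Continuous fun t => g t ^ 2 := hgc.pow 2
  have cont2 : Continuous fun t => |2 * g t * G t| := ((continuous_const.mul hgc).mul hGc).abs
  have cont3 : Continuous fun t => |g t * G t| := (hgc.mul hGc).abs
  have hadd1 : (∫ t in (c - δ/2)..c, g t ^ 2) + ∫ t in c..(c + δ/2), g t ^ 2
      = ∫ t in (c - δ/2)..(c + δ/2), g t ^ 2 :=
    intervalIntegral.integral_add_adjacent_intervals (cont1.intervalIntegrable _ _)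
      (cont1.intervalIntegrable _ _)
  have hadd2 : (∫ t in (c - δ/2)..c, |2 * g t * G t|) + ∫ t in c..(c + δ/2), |2 * g t * G t|
      = ∫ t in (c - δ/2)..(c + δ/2), |2 * g t * G t| :=
    intervalIntegral.integral_add_adjacent_intervals (cont2.intervalIntegrable _ _)
      (cont2.intervalIntegrable _ _)
  have habs : (∫ t in (c - δ/2)..(c + δ/2), |2 * g t * G t|)
      = 2 * ∫ t in (c - δ/2)..(c + δ/2), |g t * G t| := by
    rw [← intervalIntegral.integral_const_mul]
    apply intervalIntegral.integral_congr
    intro t _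
    show |2 * g t * G t| = 2 * |g t * G t|
    rw [mul_assoc, abs_mul, abs_two]
  have hsplit : (∫ t in (c - δ/2)..(c + δ/2), (δ⁻¹ * g t ^ 2 + |g t * G t|))
      = δ⁻¹ * (∫ t in (c - δ/2)..(c + δ/2), g t ^ 2)
        + ∫ t in (c - δ/2)..(c + δ/2), |g t * G t| := by
    rw [intervalIntegral.integral_add ((continuous_const.fun_mul cont1).intervalIntegrable _ _)
      (cont3.intervalIntegrable _ _), intervalIntegral.integral_const_mul]
  have hinv : (δ/2)⁻¹ = 2 * δ⁻¹ := by
    rw [inv_div, div_eq_mul_inv]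
  rw [hinv] at h1 h2
  rw [hsplit]
  have hmul : δ⁻¹ * ((∫ t in (c - δ/2)..c, g t ^ 2) + ∫ t in c..(c + δ/2), g t ^ 2)
      = δ⁻¹ * ∫ t in (c - δ/2)..(c + δ/2), g t ^ 2 := by rw [hadd1]
  linarith [h1, h2, hmul, hadd2, habs]

private lemma rls_sum (F : ℝ → ℝ) (hF : Continuous F) (hF0 : ∀ t, 0 ≤ F t)
    (a b : ℕ → ℝ) (M : ℕ) (hM : 1 ≤ M)
    (hab : ∀ i, i < M → a i ≤ b i) (hba : ∀ i, i + 1 < M → b i ≤ a (i + 1))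
    (h0 : 0 ≤ a 0) (h1 : b (M - 1) ≤ 1) :
    ∑ i ∈ Finset.range M, ∫ t in a i..b i, F t ≤ ∫ t in (0:ℝ)..1, F t := by
  have haux : ∀ i, i < M → 0 ≤ a i := by
    intro i
    induction i with
    | zero => intro _; exact h0
    | succ i ih =>
      intro hi
      have g1 := hba i (by omega)
      have g2 := hab i (by omega)
      have g3 := ih (by omega)
      linarith
  have key : ∀ n, 1 ≤ n → n ≤ M →
      ∑ i ∈ Finset.range n, ∫ t in a i..b i, F t ≤ ∫ t in (0:ℝ)..(b (n - 1)), F t := by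
    intro n
    induction n with
    | zero => omega
    | succ n ih =>
      intro _ hnM
      rcases Nat.eq_zero_or_pos n with h0n | h0n
      · subst h0n
        norm_num [Finset.sum_range_one]
        apply intervalIntegral.integral_mono_interval h0 (hab 0 (by omega)) le_rfl
          (ae_of_all _ hF0) (hF.intervalIntegrable _ _)
      · have hban : b (n - 1) ≤ a n := by
          have := hba (n - 1) (by omega)
          rwa [show n - 1 + 1 = n by omega] at this
        have hbn0 : 0 ≤ b (n - 1) :=
          le_trans (haux (n - 1) (by omega)) (hab (n - 1) (by omega))
        have step1 := ih h0n (by omega)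
        have step2 : (∫ t in (0:ℝ)..(b (n - 1)), F t) ≤ ∫ t in (0:ℝ)..(a n), F t :=
          intervalIntegral.integral_mono_interval le_rfl hbn0 (by linarith)
            (ae_of_all _ hF0) (hF.intervalIntegrable _ _)
        have step3 : (∫ t in (0:ℝ)..(a n), F t) + ∫ t in (a n)..(b n), F t
            = ∫ t in (0:ℝ)..(b n), F t :=
          intervalIntegral.integral_add_adjacent_intervals (hF.intervalIntegrable _ _)
            (hF.intervalIntegrable _ _)
        rw [Finset.sum_range_succ]
        simp only [Nat.add_sub_cancel]
        linarith
  have hlast := key M hM le_rfl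
  have hfinal : (∫ t in (0:ℝ)..(b (M - 1)), F t) ≤ ∫ t in (0:ℝ)..1, F t := by
    apply intervalIntegral.integral_mono_interval le_rfl
      (le_trans (haux (M - 1) (by omega)) (hab (M - 1) (by omega))) h1
      (ae_of_all _ hF0) (hF.intervalIntegrable _ _)
  linarith

/-- restricted large sieve inequality for `δ`-separated points in `[0,1]`. -/
theorem restricted_large_sieve
    (d : ℕ) (hd : 1 ≤ d) (f : ℝ → ℝ) (hf : ContDiff ℝ (⊤ : ℕ∞) f)
    (Cs N S : ℝ) (hCs : 0 < Cs) (hN : 0 < N) (hS : 0 < S)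
    (hMB : ∀ k : ℕ, k = d - 1 ∨ k = d →
      (∫ x in Set.Icc (0 : ℝ) 1, (iteratedDeriv k f x) ^ 2) ≤ (Cs * N) ^ (2 * k) * S)
    (M : ℕ) (hM : 1 ≤ M) (x : ℕ → ℝ) (δ : ℝ) (hδ : 0 < δ)
    (hmem : ∀ i, i < M → x i ∈ Set.Icc (0 : ℝ) 1)
    (hgap : ∀ i, i + 1 < M → δ ≤ x (i + 1) - x i)
    (hx0 : δ / 2 ≤ x 0) (hxM : x (M - 1) ≤ 1 - δ / 2) :
    ∑ i ∈ Finset.range M, (iteratedDeriv (d - 1) f (x i)) ^ 2 ≤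
      (Cs * N + δ⁻¹) * (Cs * N) ^ (2 * (d - 1)) * S := by
  set g := iteratedDeriv (d - 1) f with hgdef
  set G := iteratedDeriv d f with hGdef
  have hgc : Continuous g := hf.continuous_iteratedDeriv _ (WithTop.coe_le_coe.2 le_top)
  have hGc : Continuous G := hf.continuous_iteratedDeriv _ (WithTop.coe_le_coe.2 le_top)
  have hder : ∀ t, HasDerivAt g (G t) t := by
    intro t
    have hdiff : Differentiable ℝ g :=
      hf.differentiable_iteratedDeriv _ (WithTop.coe_lt_coe.2 (WithTop.coe_lt_top _))
    have h := (hdiff t).hasDerivAt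
    have heq : deriv g = G := by
      rw [hgdef, ← iteratedDeriv_succ, show d - 1 + 1 = d by omega, hGdef]
    rwa [heq] at h
  set F := fun t => δ⁻¹ * g t ^ 2 + |g t * G t| with hFdef
  have hFc : Continuous F := (continuous_const.mul (hgc.pow 2)).add (hgc.mul hGc).abs
  have hF0 : ∀ t, 0 ≤ F t := by
    intro t
    have : 0 ≤ δ⁻¹ * g t ^ 2 := by positivity
    have := abs_nonneg (g t * G t)
    simp only [hFdef]
    linarith
  -- step 1: pointwise bound then sum
  have hsum : ∑ i ∈ Finset.range M, g (x i) ^ 2 ≤ ∫ t in (0:ℝ)..1, F t := by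
    calc ∑ i ∈ Finset.range M, g (x i) ^ 2
        ≤ ∑ i ∈ Finset.range M, ∫ t in (x i - δ/2)..(x i + δ/2), F t := by
          apply Finset.sum_le_sum
          intro i _
          exact rls_point g G hder hgc hGc δ (x i) hδ
      _ ≤ ∫ t in (0:ℝ)..1, F t := by
          apply rls_sum F hFc hF0 (fun i => x i - δ/2) (fun i => x i + δ/2) M hM
          · intro i _; linarith
          · intro i hi
            have := hgap i hi
            linarith
          · linarith
          · linarith
  -- step 2: split the integral
  set A := ∫ t in (0:ℝ)..1, g t ^ 2 with hAdef
  set B := ∫ t in (0:ℝ)..1, G t ^ 2 with hBdef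
  set J := ∫ t in (0:ℝ)..1, |g t * G t| with hJdef
  have hsplit : (∫ t in (0:ℝ)..1, F t) = δ⁻¹ * A + J := by
    rw [hFdef, hAdef, hJdef,
      intervalIntegral.integral_add ((continuous_const.fun_mul (hgc.fun_pow 2)).intervalIntegrable _ _)
        ((hgc.fun_mul hGc).abs.intervalIntegrable _ _), intervalIntegral.integral_const_mul]
  -- step 3: AM-GM bound on J
  have hw : (0:ℝ) < Cs * N := mul_pos hCs hN
  have hJb : J ≤ Cs * N / 2 * A + (Cs * N)⁻¹ / 2 * B := by
    have := intervalIntegral.integral_mono_on (μ := MeasureTheory.volume) (a := (0:ℝ)) (b := 1) zero_le_one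
      ((hgc.mul hGc).abs.intervalIntegrable _ _)
      (((continuous_const.mul (hgc.pow 2)).add
        (continuous_const.mul (hGc.pow 2))).intervalIntegrable _ _)
      (f := fun t => |g t * G t|)
      (g := fun t => Cs * N / 2 * g t ^ 2 + (Cs * N)⁻¹ / 2 * G t ^ 2) ?_
    · rw [intervalIntegral.integral_add ((continuous_const.fun_mul (hgc.fun_pow 2)).intervalIntegrable _ _)
        ((continuous_const.fun_mul (hGc.fun_pow 2)).intervalIntegrable _ _),
        intervalIntegral.integral_const_mul, intervalIntegral.integral_const_mul] at this
      exact this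
    · intro t _
      have hinv : (Cs * N) * (Cs * N)⁻¹ = 1 := mul_inv_cancel₀ (ne_of_gt hw)
      show |g t * G t| ≤ Cs * N / 2 * g t ^ 2 + (Cs * N)⁻¹ / 2 * G t ^ 2
      rcases abs_cases (g t * G t) with ⟨h, _⟩ | ⟨h, _⟩ <;> rw [h] <;>
        nlinarith [sq_nonneg (Cs * N * g t - G t), sq_nonneg (Cs * N * g t + G t),
          inv_pos.2 hw, sq_nonneg (g t), sq_nonneg (G t)]
  -- step 4: moment bounds
  have hIcc : ∀ (h : ℝ → ℝ), (∫ t in (0:ℝ)..1, h t) = ∫ t in Set.Icc (0:ℝ) 1, h t := by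
    intro h
    rw [intervalIntegral.integral_of_le zero_le_one, MeasureTheory.integral_Icc_eq_integral_Ioc]
  have hA : A ≤ (Cs * N) ^ (2 * (d - 1)) * S := by
    rw [hAdef, hIcc]; exact hMB (d - 1) (Or.inl rfl)
  have hB : B ≤ (Cs * N) ^ (2 * (d - 1)) * S * (Cs * N) ^ 2 := by
    have := hMB d (Or.inr rfl)
    rw [hBdef, hIcc]
    calc (∫ t in Set.Icc (0:ℝ) 1, G t ^ 2) ≤ (Cs * N) ^ (2 * d) * S := this
    _ = (Cs * N) ^ (2 * (d - 1)) * S * (Cs * N) ^ 2 := by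
        rw [show 2 * d = 2 * (d - 1) + 2 by omega, pow_add]; ring
  have hA0 : 0 ≤ A := by
    rw [hAdef]
    exact intervalIntegral.integral_nonneg zero_le_one fun t _ => sq_nonneg _
  have hB0 : 0 ≤ B := by
    rw [hBdef]
    exact intervalIntegral.integral_nonneg zero_le_one fun t _ => sq_nonneg _
  -- final arithmetic
  have hδinv : (0:ℝ) < δ⁻¹ := inv_pos.2 hδ
  have hinv2 : (Cs * N)⁻¹ / 2 * ((Cs * N) ^ (2 * (d - 1)) * S * (Cs * N) ^ 2)
      = Cs * N / 2 * ((Cs * N) ^ (2 * (d - 1)) * S) := by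
    field_simp
  have hP0 : 0 < (Cs * N) ^ (2 * (d - 1)) * S := by positivity
  have h3 : (Cs * N)⁻¹ / 2 * B ≤ Cs * N / 2 * ((Cs * N) ^ (2 * (d - 1)) * S) := by
    calc (Cs * N)⁻¹ / 2 * B ≤ (Cs * N)⁻¹ / 2 * ((Cs * N) ^ (2 * (d - 1)) * S * (Cs * N) ^ 2) := by
          apply mul_le_mul_of_nonneg_left hB
          positivity
    _ = _ := hinv2
  have h4 : δ⁻¹ * A ≤ δ⁻¹ * ((Cs * N) ^ (2 * (d - 1)) * S) :=
    mul_le_mul_of_nonneg_left hA (le_of_lt hδinv)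
  have h5 : Cs * N / 2 * A ≤ Cs * N / 2 * ((Cs * N) ^ (2 * (d - 1)) * S) :=
    mul_le_mul_of_nonneg_left hA (by positivity)
  have : ∑ i ∈ Finset.range M, g (x i) ^ 2 ≤
      (Cs * N + δ⁻¹) * ((Cs * N) ^ (2 * (d - 1)) * S) := by
    rw [hsplit] at hsum
    nlinarith [hsum, hJb, h3, h4, h5]
  calc ∑ i ∈ Finset.range M, (iteratedDeriv (d - 1) f (x i)) ^ 2
      = ∑ i ∈ Finset.range M, g (x i) ^ 2 := rfl
    _ ≤ (Cs * N + δ⁻¹) * ((Cs * N) ^ (2 * (d - 1)) * S) := this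
    _ = (Cs * N + δ⁻¹) * (Cs * N) ^ (2 * (d - 1)) * S := by ring
end

section
/- Let m ≥ 2 be an integer, let I be an interval of length r, and let f be a C^∞ real-valued function having at least m distinct zeros in I. Then max_{θ∈I} |f(θ)| ≤ (4er/m)^m · max_{x∈I} |f^{(m)}(x)|, and max_{θ∈I} |f′(θ)| ≤ (4er/(m−1))^{m−1} · max_{x∈I} |f^{(m)}(x)|. -/
open Set Polynomial


lemma sorted_family {n : ℕ} (z : Fin n → ℝ) (hz : Function.Injective z) :
    ∃ w : Fin n → ℝ, StrictMono w ∧ ∀ i, ∃ j, z j = w i := by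
  have hcard : (Finset.image z Finset.univ).card = n := by
    rw [Finset.card_image_of_injective _ hz, Finset.card_univ, Fintype.card_fin]
  refine ⟨Finset.orderEmbOfFin _ hcard, (Finset.orderEmbOfFin _ hcard).strictMono, fun i => ?_⟩
  have := Finset.orderEmbOfFin_mem _ hcard i
  simpa using Finset.mem_image.mp this

lemma rolle_step {a b : ℝ} {f : ℝ → ℝ} (hf : Differentiable ℝ f) {n : ℕ}
    (w : Fin (n+1) → ℝ) (hw : StrictMono w) (hmem : ∀ i, w i ∈ Icc a b)
    (h0 : ∀ i, f (w i) = 0) :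
    ∃ v : Fin n → ℝ, StrictMono v ∧ (∀ i, v i ∈ Icc a b) ∧ ∀ i, deriv f (v i) = 0 := by
  have key : ∀ i : Fin n, ∃ c ∈ Ioo (w i.castSucc) (w i.succ), deriv f c = 0 := fun i =>
    exists_deriv_eq_zero (hw (Fin.castSucc_lt_succ (i := i))) hf.continuous.continuousOn
      (by rw [h0, h0])
  choose v hv1 hv2 using key
  refine ⟨v, ?_, fun i => ?_, hv2⟩
  · intro i j hij
    have hle : (i.succ : Fin (n+1)) ≤ j.castSucc := by
      simp only [Fin.le_def, Fin.lt_def, Fin.val_succ, Fin.coe_castSucc] at *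
      omega
    calc v i < w i.succ := (hv1 i).2
      _ ≤ w j.castSucc := hw.monotone hle
      _ < v j := (hv1 j).1
  · have h1 := hv1 i
    exact ⟨le_trans (hmem i.castSucc).1 h1.1.le, le_trans h1.2.le (hmem i.succ).2⟩

lemma iter_rolle {a b : ℝ} : ∀ (n : ℕ) (f : ℝ → ℝ), ContDiff ℝ (⊤ : ℕ∞) f →
    ∀ w : Fin (n+1) → ℝ, StrictMono w → (∀ i, w i ∈ Icc a b) → (∀ i, f (w i) = 0) →
    ∃ ξ ∈ Icc a b, iteratedDeriv n f ξ = 0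
  | 0, f, _, w, _, hmem, h0 => ⟨w 0, hmem 0, by simpa using h0 0⟩
  | (n+1), f, hf, w, hw, hmem, h0 => by
    obtain ⟨v, hv1, hv2, hv3⟩ := rolle_step (hf.differentiable (by simp)) w hw hmem h0
    obtain ⟨ξ, hξ, h⟩ :=
      iter_rolle n (deriv f) (contDiff_infty_iff_deriv.mp hf).2 v hv1 hv2 hv3
    exact ⟨ξ, hξ, by rw [iteratedDeriv_succ']; exact h⟩

lemma iteratedDeriv_polyEval (n : ℕ) : ∀ (p : Polynomial ℝ),
    iteratedDeriv n (fun x => p.eval x) = fun x => (derivative^[n] p).eval x := by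
  induction n with
  | zero => intro p; simp
  | succ n ih =>
    intro p
    rw [iteratedDeriv_succ']
    have : deriv (fun x => p.eval x) = fun x => p.derivative.eval x :=
      funext fun x => Polynomial.deriv _
    rw [this, ih p.derivative, Function.iterate_succ_apply]

lemma contDiff_polyEval (p : Polynomial ℝ) : ContDiff ℝ (⊤ : ℕ∞) (fun x => p.eval x) :=
  contDiff_of_differentiable_iteratedDeriv fun m _ => by
    rw [iteratedDeriv_polyEval]; exact (derivative^[m] p).differentiable

lemma iteratedDeriv_sub' (n : ℕ) : ∀ {f g : ℝ → ℝ}, ContDiff ℝ (⊤:ℕ∞) f →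
    ContDiff ℝ (⊤:ℕ∞) g → ∀ x : ℝ,
    iteratedDeriv n (fun y => f y - g y) x = iteratedDeriv n f x - iteratedDeriv n g x := by
  induction n with
  | zero => intro f g _ _ x; simp
  | succ n ih =>
    intro f g hf hg x
    have heq : deriv (fun y => f y - g y) = fun y => deriv f y - deriv g y :=
      funext fun y => deriv_fun_sub ((hf.differentiable (by simp)) y)
        ((hg.differentiable (by simp)) y)
    rw [iteratedDeriv_succ', iteratedDeriv_succ', iteratedDeriv_succ', heq]
    exact ih (contDiff_infty_iff_deriv.mp hf).2 (contDiff_infty_iff_deriv.mp hg).2 x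

lemma iterate_derivative_monic {p : Polynomial ℝ} {n : ℕ} (hp : p.Monic)
    (hdeg : p.natDegree = n) : derivative^[n] p = Polynomial.C (n.factorial : ℝ) := by
  have h1 : derivative^[n] (X ^ n : Polynomial ℝ) = C (n.factorial : ℝ) := by
    rw [Polynomial.iterate_derivative_X_pow_eq_C_mul]
    simp [Nat.descFactorial_self]
  by_cases h : p = X ^ n
  · rw [h, h1]
  · have hd : (p - X ^ n).degree < (n : WithBot ℕ) := by
      have hde : p.degree = (X ^ n : Polynomial ℝ).degree := by
        rw [Polynomial.degree_eq_natDegree hp.ne_zero, hdeg, Polynomial.degree_X_pow]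
      have hlc : p.leadingCoeff = (X ^ n : Polynomial ℝ).leadingCoeff := by
        rw [hp, (Polynomial.monic_X_pow n).leadingCoeff]
      have := Polynomial.degree_sub_lt hde hp.ne_zero hlc
      rwa [Polynomial.degree_eq_natDegree hp.ne_zero, hdeg] at this
    have hlt : (p - X ^ n).natDegree < n :=
      (Polynomial.natDegree_lt_iff_degree_lt (sub_ne_zero.mpr h)).mpr hd
    have h0 : derivative^[n] (p - X ^ n) = 0 := Polynomial.iterate_derivative_eq_zero hlt
    rw [Polynomial.iterate_derivative_sub, sub_eq_zero] at h0
    rw [h0, h1]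

lemma key_bound {a b : ℝ} (hab : a ≤ b) {n : ℕ} (g : ℝ → ℝ)
    (hg : ContDiff ℝ (⊤:ℕ∞) g) (z : Fin n → ℝ) (hz : Function.Injective z)
    (hzmem : ∀ i, z i ∈ Icc a b) (hzero : ∀ i, g (z i) = 0)
    (M : ℝ) (hM0 : 0 ≤ M) (hM : ∀ x ∈ Icc a b, |iteratedDeriv n g x| ≤ M)
    {θ : ℝ} (hθ : θ ∈ Icc a b) :
    |g θ| ≤ (b - a) ^ n / n.factorial * M := by
  have hba : (0:ℝ) ≤ b - a := by linarith
  have hrhs : 0 ≤ (b - a) ^ n / n.factorial * M :=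
    mul_nonneg (div_nonneg (pow_nonneg hba n) (Nat.cast_nonneg _)) hM0
  by_cases hrange : ∃ i, z i = θ
  · obtain ⟨i, hi⟩ := hrange
    rw [← hi, hzero, abs_zero]; exact hrhs
  · set P : Polynomial ℝ := ∏ i : Fin n, (X - C (z i)) with hP
    have hPmonic : P.Monic := monic_prod_of_monic _ _ fun i _ => monic_X_sub_C _
    have hPdeg : P.natDegree = n := by
      rw [hP, natDegree_prod_of_monic _ _ fun i _ => monic_X_sub_C _]
      simp [natDegree_X_sub_C]
    have hPeval : ∀ x : ℝ, P.eval x = ∏ i : Fin n, (x - z i) := fun x => by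
      simp [hP, eval_prod]
    have hPθ : P.eval θ ≠ 0 := by
      rw [hPeval]
      exact Finset.prod_ne_zero_iff.mpr fun i _ =>
        sub_ne_zero.mpr fun hc => hrange ⟨i, hc.symm⟩
    set c : ℝ := g θ / P.eval θ with hc
    set h : ℝ → ℝ := fun x => g x - (C c * P).eval x with hh
    have hhc : ContDiff ℝ (⊤:ℕ∞) h := hg.sub (contDiff_polyEval (C c * P))
    set Z : Fin (n+1) → ℝ := Fin.cons θ z with hZ
    have hZinj : Function.Injective Z :=
      Fin.cons_injective_of_injective (fun hmem => by
        obtain ⟨i, hi⟩ := hmem; exact hrange ⟨i, hi⟩) hz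
    have hZmem : ∀ i, Z i ∈ Icc a b := Fin.cases hθ hzmem
    have hZzero : ∀ i, h (Z i) = 0 := by
      refine Fin.cases ?_ ?_
      · show g θ - (C c * P).eval θ = 0
        rw [eval_mul, eval_C, hc, div_mul_cancel₀ _ hPθ, sub_self]
      · intro i
        show g (z i) - (C c * P).eval (z i) = 0
        have : P.eval (z i) = 0 := by
          rw [hPeval]
          exact Finset.prod_eq_zero (Finset.mem_univ i) (by ring)
        rw [eval_mul, eval_C, this, mul_zero, hzero, sub_self]
    obtain ⟨w, hw, hwz⟩ := sorted_family Z hZinj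
    have hwmem : ∀ i, w i ∈ Icc a b := fun i => by
      obtain ⟨j, hj⟩ := hwz i; rw [← hj]; exact hZmem j
    have hwzero : ∀ i, h (w i) = 0 := fun i => by
      obtain ⟨j, hj⟩ := hwz i; rw [← hj]; exact hZzero j
    obtain ⟨ξ, hξmem, hξ⟩ := iter_rolle n h hhc w hw hwmem hwzero
    have hcomp : iteratedDeriv n h ξ = iteratedDeriv n g ξ - c * n.factorial := by
      rw [hh]
      rw [iteratedDeriv_sub' n hg (contDiff_polyEval (C c * P)) ξ]
      congr 1
      rw [iteratedDeriv_polyEval]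
      rw [Polynomial.iterate_derivative_C_mul, iterate_derivative_monic hPmonic hPdeg]
      simp
    have hgξ : iteratedDeriv n g ξ = c * n.factorial := by
      rw [hcomp] at hξ; linarith
    have hfac : (0:ℝ) < n.factorial := by exact_mod_cast n.factorial_pos
    have hcabs : |c| ≤ M / n.factorial := by
      have : |iteratedDeriv n g ξ| ≤ M := hM ξ hξmem
      rw [hgξ, abs_mul, abs_of_pos hfac] at this
      rw [le_div_iff₀ hfac]
      exact this
    have hPabs : |P.eval θ| ≤ (b - a) ^ n := by
      rw [hPeval, Finset.abs_prod]
      calc ∏ i : Fin n, |θ - z i| ≤ ∏ _i : Fin n, (b - a) := by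
            refine Finset.prod_le_prod (fun i _ => abs_nonneg _) fun i _ => ?_
            have h1 := (hzmem i).1
            have h2 := (hzmem i).2
            have h3 := hθ.1
            have h4 := hθ.2
            rw [abs_sub_le_iff]; constructor <;> linarith
        _ = (b - a) ^ n := by
            rw [Finset.prod_const, Finset.card_univ, Fintype.card_fin]
    have hgθ : g θ = c * P.eval θ := by rw [hc, div_mul_cancel₀ _ hPθ]
    calc |g θ| = |c| * |P.eval θ| := by rw [hgθ, abs_mul]
      _ ≤ M / n.factorial * (b - a) ^ n :=
          mul_le_mul hcabs hPabs (abs_nonneg _) (div_nonneg hM0 hfac.le)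
      _ = (b - a) ^ n / n.factorial * M := by ring

lemma pow_le_exp_mul_factorial : ∀ n : ℕ, (n:ℝ)^n ≤ Real.exp 1 ^ n * n.factorial
  | 0 => by simp
  | (n+1) => by
    have ih := pow_le_exp_mul_factorial n
    rcases Nat.eq_zero_or_pos n with h | h
    · subst h
      simpa using Real.one_le_exp (by norm_num)
    · have hn : (0:ℝ) < n := by exact_mod_cast h
      have h1 : (1 + 1/(n:ℝ))^n ≤ Real.exp 1 := by
        have h2 := Real.add_one_le_exp (1/(n:ℝ))
        calc (1 + 1/(n:ℝ))^n ≤ Real.exp (1/(n:ℝ)) ^ n :=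
              pow_le_pow_left₀ (by positivity) (by linarith) n
          _ = Real.exp ((n:ℝ) * (1/(n:ℝ))) := (Real.exp_nat_mul _ n).symm
          _ = Real.exp 1 := by rw [mul_one_div, div_self hn.ne']
      have hkey : ((n:ℝ)+1)^n ≤ (n:ℝ)^n * Real.exp 1 := by
        have he : ((n:ℝ)+1)^n = (n:ℝ)^n * (1 + 1/(n:ℝ))^n := by
          rw [← mul_pow]; congr 1; field_simp
        rw [he]
        exact mul_le_mul_of_nonneg_left h1 (pow_nonneg hn.le n)
      have hfac : (0:ℝ) ≤ n.factorial := Nat.cast_nonneg _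
      have hexp : (0:ℝ) < Real.exp 1 := Real.exp_pos 1
      calc ((n+1:ℕ):ℝ)^(n+1) = ((n:ℝ)+1) * ((n:ℝ)+1)^n := by push_cast; ring
        _ ≤ ((n:ℝ)+1) * ((n:ℝ)^n * Real.exp 1) :=
            mul_le_mul_of_nonneg_left hkey (by positivity)
        _ ≤ ((n:ℝ)+1) * ((Real.exp 1 ^ n * n.factorial) * Real.exp 1) :=
            mul_le_mul_of_nonneg_left
              (mul_le_mul_of_nonneg_right ih hexp.le) (by positivity)
        _ = Real.exp 1 ^ (n+1) * (((n:ℝ)+1) * n.factorial) := by ring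
        _ = Real.exp 1 ^ (n+1) * (n+1).factorial := by
            rw [Nat.factorial_succ]; push_cast; ring

lemma final_step {r : ℝ} (hr : 0 ≤ r) {n : ℕ} (hn : 1 ≤ n) :
    r ^ n / n.factorial ≤ (4 * Real.exp 1 * r / n) ^ n := by
  have hnpos : (0:ℝ) < n := by exact_mod_cast hn
  have hfac : (0:ℝ) < n.factorial := by exact_mod_cast n.factorial_pos
  have hb := pow_le_exp_mul_factorial n
  have h1 : r ^ n / n.factorial ≤ (Real.exp 1 * r / n) ^ n := by
    rw [div_pow, mul_pow, div_le_div_iff₀ hfac (by positivity)]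
    calc r ^ n * (n:ℝ)^n ≤ r ^ n * (Real.exp 1 ^ n * n.factorial) :=
          mul_le_mul_of_nonneg_left hb (pow_nonneg hr n)
      _ = Real.exp 1 ^ n * r ^ n * n.factorial := by ring
  refine h1.trans ?_
  have h2 : Real.exp 1 * r / n ≤ 4 * Real.exp 1 * r / n := by
    gcongr
    nlinarith [Real.exp_pos 1, hr]
  exact pow_le_pow_left₀ (by positivity) h2 n

/-- Hermite-interpolation bounds for a smooth function with at least `m`
distinct zeros in an interval `I = [a, b]` of length `r`. -/
theorem interpolation_zero_bound
    (m : ℕ) (hm : 2 ≤ m) (a b r : ℝ) (hab : a ≤ b) (hr : r = b - a)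
    (f : ℝ → ℝ) (hf : ContDiff ℝ (⊤ : ℕ∞) f)
    (z : Fin m → ℝ) (hz : Function.Injective z)
    (hzmem : ∀ i, z i ∈ Set.Icc a b) (hzero : ∀ i, f (z i) = 0) :
    (∀ θ ∈ Set.Icc a b,
        |f θ| ≤ (4 * Real.exp 1 * r / m) ^ m *
          ⨆ x : Set.Icc a b, |iteratedDeriv m f x|) ∧
    (∀ θ ∈ Set.Icc a b,
        |deriv f θ| ≤ (4 * Real.exp 1 * r / ((m : ℝ) - 1)) ^ (m - 1) *
          ⨆ x : Set.Icc a b, |iteratedDeriv m f x|) := by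
  have hamem : a ∈ Set.Icc a b := Set.left_mem_Icc.mpr hab
  haveI : Nonempty (Set.Icc a b) := ⟨⟨a, hamem⟩⟩
  set M : ℝ := ⨆ x : Set.Icc a b, |iteratedDeriv m f x| with hMdef
  have hbdd : BddAbove (Set.range fun x : Set.Icc a b => |iteratedDeriv m f x|) := by
    have hcomp := ((isCompact_Icc (a := a) (b := b)).image
      ((hf.continuous_iteratedDeriv m (by exact_mod_cast le_top)).abs)).bddAbove
    rwa [Set.image_eq_range] at hcomp
  have hM : ∀ x ∈ Set.Icc a b, |iteratedDeriv m f x| ≤ M := fun x hx =>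
    le_ciSup hbdd (⟨x, hx⟩ : Set.Icc a b)
  have hM0 : 0 ≤ M := (abs_nonneg _).trans (hM a hamem)
  have hr0 : 0 ≤ r := by rw [hr]; linarith
  obtain ⟨k, rfl⟩ : ∃ k, m = k + 1 := ⟨m - 1, by omega⟩
  have hk1 : 1 ≤ k := by omega
  constructor
  · intro θ hθ
    have h1 := key_bound hab f hf z hz hzmem hzero M hM0 hM hθ
    refine h1.trans (mul_le_mul_of_nonneg_right ?_ hM0)
    rw [hr]
    exact final_step (by linarith) (by omega)
  · intro θ hθ
    obtain ⟨w, hw, hwz⟩ := sorted_family z hz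
    have hwmem : ∀ i, w i ∈ Set.Icc a b := fun i => by
      obtain ⟨j, hj⟩ := hwz i; rw [← hj]; exact hzmem j
    have hwzero : ∀ i, f (w i) = 0 := fun i => by
      obtain ⟨j, hj⟩ := hwz i; rw [← hj]; exact hzero j
    obtain ⟨v, hv1, hv2, hv3⟩ :=
      rolle_step (hf.differentiable (by simp)) w hw hwmem hwzero
    have hdf : ContDiff ℝ (⊤ : ℕ∞) (deriv f) := (contDiff_infty_iff_deriv.mp hf).2
    have hM' : ∀ x ∈ Set.Icc a b, |iteratedDeriv k (deriv f) x| ≤ M := fun x hx => by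
      rw [← iteratedDeriv_succ']; exact hM x hx
    have h1 := key_bound hab (deriv f) hdf v hv1.injective hv2 hv3 M hM0 hM' hθ
    have hcast : ((k + 1 : ℕ) : ℝ) - 1 = (k : ℝ) := by push_cast; ring
    have hnat : k + 1 - 1 = k := by omega
    rw [hcast, hnat]
    refine h1.trans (mul_le_mul_of_nonneg_right ?_ hM0)
    rw [hr]
    exact final_step (by linarith) hk1
end

section
/- Fix strictly positive numbers μ and ν. Let I = (a,b) be an interval of length greater than 2μ/ν, and let f be a C¹ function on I such that at each point x ∈ I either |f(x)| > μ or |f′(x)| > ν. Then for each zero x_i ∈ I of f with x_i − a > μ/ν and b − x_i > μ/ν there exists an interval I(x_i) = (a′,b′) with f(a′)·f(b′) < 0 and |f(a′)| = |f(b′)| = μ, such that x_i ∈ I(x_i) ⊆ (x_i − μ/ν, x_i + μ/ν); moreover the intervals I(x_i) associated to distinct such zeros are pairwise disjoint. -/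
open Set

/-- One-sided construction: from a zero with derivative `> ν`, `g` climbs to `μ`
within distance `μ/ν` to the right, staying strictly between `0` and `μ` in between. -/
lemma stability_one_side (μ ν : ℝ) (hμ : 0 < μ) (hν : 0 < ν)
    (a b : ℝ) (g : ℝ → ℝ) (hg : ContDiffOn ℝ 1 g (Set.Ioo a b))
    (hrep : ∀ t ∈ Set.Ioo a b, μ < |g t| ∨ ν < |deriv g t|)
    (x : ℝ) (hx : x ∈ Set.Ioo a b) (hxb : μ / ν < b - x)
    (hg0 : g x = 0) (hg' : ν < deriv g x) :
    ∃ c, x < c ∧ c ≤ x + μ / ν ∧ g c = μ ∧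
      ∀ u ∈ Set.Ioo x c, 0 < g u ∧ g u < μ := by
  set m := μ / ν with hm_def
  have hm : 0 < m := div_pos hμ hν
  have hνm : ν * m = μ := by rw [hm_def]; field_simp
  have hxm : x + m < b := by linarith
  have hsub : Icc x (x + m) ⊆ Ioo a b := fun t ht =>
    ⟨lt_of_lt_of_le hx.1 ht.1, lt_of_le_of_lt ht.2 hxm⟩
  have hdiff : ∀ t ∈ Ioo a b, DifferentiableAt ℝ g t := fun t ht =>
    ((hg.differentiableOn one_ne_zero) t ht).differentiableAt (isOpen_Ioo.mem_nhds ht)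
  have hcont : ContinuousOn g (Ioo a b) := hg.continuousOn
  have hdercont : ContinuousOn (deriv g) (Ioo a b) :=
    hg.continuousOn_deriv_of_isOpen isOpen_Ioo le_rfl
  set A : Set ℝ := {t | t ∈ Icc x (x + m) ∧ ∀ u ∈ Icc x t, g u < μ ∧ ν < deriv g u} with hA_def
  have hxA : x ∈ A := by
    refine ⟨⟨le_rfl, by linarith⟩, fun u hu => ?_⟩
    have : u = x := le_antisymm hu.2 hu.1
    subst this
    exact ⟨by rw [hg0]; exact hμ, hg'⟩
  have hbdd : BddAbove A := ⟨x + m, fun t ht => ht.1.2⟩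
  set c := sSup A with hc_def
  have hxc : x ≤ c := le_csSup hbdd hxA
  have hcm : c ≤ x + m := csSup_le ⟨x, hxA⟩ (fun t ht => ht.1.2)
  have hcI : c ∈ Ioo a b := ⟨lt_of_lt_of_le hx.1 hxc, lt_of_le_of_lt hcm hxm⟩
  have F1 : ∀ u ∈ Ico x c, g u < μ ∧ ν < deriv g u := by
    intro u hu
    obtain ⟨t, htA, hut⟩ := exists_lt_of_lt_csSup ⟨x, hxA⟩ hu.2
    exact htA.2 u ⟨hu.1, hut.le⟩
  have hIccsub : Icc x c ⊆ Ioo a b := fun t ht =>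
    hsub ⟨ht.1, le_trans ht.2 hcm⟩
  -- mean value bound on [x, c]
  have hMVT : ∀ u ∈ Icc x c, ∀ v ∈ Icc x c, u ≤ v → ν * (v - u) ≤ g v - g u := by
    intro u hu v hv huv
    refine (convex_Icc x c).mul_sub_le_image_sub_of_le_deriv
      (hcont.mono hIccsub) ?_ ?_ u hu v hv huv
    · intro t ht
      rw [interior_Icc] at ht
      exact (hdiff t (hIccsub (Ioo_subset_Icc_self ht))).differentiableWithinAt
    · intro t ht
      rw [interior_Icc] at ht
      exact (F1 t ⟨ht.1.le, ht.2⟩).2.le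
  have glb : ∀ u ∈ Icc x c, ν * (u - x) ≤ g u := by
    intro u hu
    have := hMVT x ⟨le_rfl, hxc⟩ u hu hu.1
    rw [hg0] at this; linarith
  -- limits at c
  have lim_le : ∀ (F : ℝ → ℝ) (M : ℝ), ContinuousAt F c → x < c →
      (∀ u ∈ Set.Ico x c, F u ≤ M) → F c ≤ M := by
    intro F M hF hxc' hFu
    by_contra hcon
    push_neg at hcon
    obtain ⟨δ, hδ, hball⟩ := Metric.continuousAt_iff.1 hF (F c - M) (by linarith)
    set u := max x (c - δ / 2) with hu_def
    have hu1 : x ≤ u := le_max_left _ _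
    have hu2 : u < c := max_lt hxc' (by linarith)
    have hu3 : c - δ / 2 ≤ u := le_max_right _ _
    have hdist : dist u c < δ := by
      rw [Real.dist_eq, abs_of_nonpos (by linarith)]
      linarith
    have := hball hdist
    rw [Real.dist_eq, abs_lt] at this
    have : M < F u := by linarith [this.1]
    exact absurd (hFu u ⟨hu1, hu2⟩) (not_le.2 this)
  have gcle : g c ≤ μ := by
    rcases eq_or_lt_of_le hxc with h | h
    · rw [← h, hg0]; exact hμ.le
    · exact lim_le g μ ((hcont.continuousAt (isOpen_Ioo.mem_nhds hcI))) h
        (fun u hu => (F1 u hu).1.le)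
  have dercge : ν ≤ deriv g c := by
    rcases eq_or_lt_of_le hxc with h | h
    · rw [← h]; exact hg'.le
    · have := lim_le (fun t => -deriv g t) (-ν)
        ((hdercont.continuousAt (isOpen_Ioo.mem_nhds hcI)).neg) h
        (fun u hu => by simpa using (F1 u hu).2.le)
      simpa using this
  have gc0 : 0 ≤ g c := by
    have := glb c ⟨hxc, le_rfl⟩
    nlinarith
  -- main claim: g c = μ
  have hgcμ : g c = μ := by
    by_contra hne
    have hlt : g c < μ := lt_of_le_of_ne gcle hne
    rcases eq_or_lt_of_le hcm with hceq | hclt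
    · have hgl := glb c ⟨hxc, le_rfl⟩
      have e : c - x = m := by rw [hceq]; ring
      rw [e, hνm] at hgl
      linarith
    · have habs : |g c| < μ := abs_lt.2 ⟨by linarith, hlt⟩
      have hder : ν < |deriv g c| := (hrep c hcI).resolve_left (not_lt.2 habs.le)
      have hderc : ν < deriv g c := by
        rwa [abs_of_nonneg (by linarith)] at hder
      -- extend to the right of c: contradiction with sSup
      have hU : IsOpen ((Ioo a b ∩ g ⁻¹' Iio μ) ∩ (Ioo a b ∩ deriv g ⁻¹' Ioi ν)) :=
        (hcont.isOpen_inter_preimage isOpen_Ioo isOpen_Iio).inter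
          (hdercont.isOpen_inter_preimage isOpen_Ioo isOpen_Ioi)
      have hcU : c ∈ (Ioo a b ∩ g ⁻¹' Iio μ) ∩ (Ioo a b ∩ deriv g ⁻¹' Ioi ν) :=
        ⟨⟨hcI, hlt⟩, ⟨hcI, hderc⟩⟩
      obtain ⟨ε, hε, hball⟩ := Metric.isOpen_iff.1 hU c hcU
      set d := min (c + ε / 2) (x + m) with hd_def
      have hdc : c < d := lt_min (by linarith) hclt
      have hdm : d ≤ x + m := min_le_right _ _
      have hdball : ∀ u, c ≤ u → u ≤ d → u ∈ Metric.ball c ε := by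
        intro u h1 h2
        rw [Metric.mem_ball, Real.dist_eq, abs_of_nonneg (by linarith)]
        have : d ≤ c + ε / 2 := min_le_left _ _
        linarith
      have hdA : d ∈ A := by
        refine ⟨⟨by linarith, hdm⟩, fun u hu => ?_⟩
        rcases lt_or_ge u c with h | h
        · exact F1 u ⟨hu.1, h⟩
        · have := hball (hdball u h hu.2)
          exact ⟨this.1.2, this.2.2⟩
      have := le_csSup hbdd hdA
      linarith
  have hxltc : x < c := by
    rcases eq_or_lt_of_le hxc with h | h
    · exfalso; rw [← h, hg0] at hgcμ; linarith
    · exact h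
  refine ⟨c, hxltc, hcm, hgcμ, fun u hu => ?_⟩
  constructor
  · have := glb u ⟨hu.1.le, hu.2.le⟩
    nlinarith [hu.1]
  · exact (F1 u ⟨hu.1.le, hu.2⟩).1

/-- Left-sided version, by reflection. -/
lemma stability_one_side_left (μ ν : ℝ) (hμ : 0 < μ) (hν : 0 < ν)
    (a b : ℝ) (g : ℝ → ℝ) (hg : ContDiffOn ℝ 1 g (Set.Ioo a b))
    (hrep : ∀ t ∈ Set.Ioo a b, μ < |g t| ∨ ν < |deriv g t|)
    (x : ℝ) (hx : x ∈ Set.Ioo a b) (hxa : μ / ν < x - a)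
    (hg0 : g x = 0) (hg' : ν < deriv g x) :
    ∃ l, l < x ∧ x - μ / ν ≤ l ∧ g l = -μ ∧
      ∀ u ∈ Set.Ioo l x, -μ < g u ∧ g u < 0 := by
  set h : ℝ → ℝ := fun t => -g (-t) with hh_def
  have hmaps : ∀ t ∈ Ioo (-b) (-a), -t ∈ Ioo a b := by
    intro t ht; exact ⟨by linarith [ht.2], by linarith [ht.1]⟩
  have hch : ContDiffOn ℝ 1 h (Ioo (-b) (-a)) := by
    have h1 : ContDiffOn ℝ 1 (fun t : ℝ => g (-t)) (Ioo (-b) (-a)) :=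
      hg.comp (contDiff_neg.contDiffOn) (fun t ht => hmaps t ht)
    exact h1.neg
  have hderh : ∀ t, deriv h t = deriv g (-t) := by
    intro t
    have e1 : deriv h t = -(deriv (fun t : ℝ => g (-t)) t) := deriv.neg
    rw [e1, deriv_comp_neg, neg_neg]
  have hreph : ∀ t ∈ Ioo (-b) (-a), μ < |h t| ∨ ν < |deriv h t| := by
    intro t ht
    have := hrep (-t) (hmaps t ht)
    rw [hderh t]
    simpa [hh_def, abs_neg] using this
  have hxh : -x ∈ Ioo (-b) (-a) := ⟨by linarith [hx.2], by linarith [hx.1]⟩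
  have hxbh : μ / ν < -a - (-x) := by linarith
  have hh0 : h (-x) = 0 := by simp [hh_def, hg0]
  have hh' : ν < deriv h (-x) := by rw [hderh, neg_neg]; exact hg'
  obtain ⟨c, hc1, hc2, hc3, hc4⟩ :=
    stability_one_side μ ν hμ hν (-b) (-a) h hch hreph (-x) hxh hxbh hh0 hh'
  refine ⟨-c, by linarith, by linarith, ?_, ?_⟩
  · have h3 : -g (-c) = μ := hc3
    linarith
  · intro u hu
    have hmem : -u ∈ Ioo (-x) c := ⟨by linarith [hu.2], by linarith [hu.1]⟩
    have := hc4 (-u) hmem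
    have h1 : 0 < -g u := by simpa [hh_def] using this.1
    have h2 : -g u < μ := by simpa [hh_def] using this.2
    constructor <;> linarith

/-- Two-sided version. -/
lemma stability_both_sides (μ ν : ℝ) (hμ : 0 < μ) (hν : 0 < ν)
    (a b : ℝ) (g : ℝ → ℝ) (hg : ContDiffOn ℝ 1 g (Set.Ioo a b))
    (hrep : ∀ t ∈ Set.Ioo a b, μ < |g t| ∨ ν < |deriv g t|)
    (x : ℝ) (hx : x ∈ Set.Ioo a b) (hxa : μ / ν < x - a) (hxb : μ / ν < b - x)
    (hg0 : g x = 0) (hg' : ν < deriv g x) :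
    ∃ l h, l < x ∧ x < h ∧ x - μ / ν ≤ l ∧ h ≤ x + μ / ν ∧
      g l = -μ ∧ g h = μ ∧
      ∀ u ∈ Set.Ioo l h, u ≠ x → 0 < |g u| ∧ |g u| < μ := by
  obtain ⟨c, hc1, hc2, hc3, hc4⟩ :=
    stability_one_side μ ν hμ hν a b g hg hrep x hx hxb hg0 hg'
  obtain ⟨l, hl1, hl2, hl3, hl4⟩ :=
    stability_one_side_left μ ν hμ hν a b g hg hrep x hx hxa hg0 hg'
  refine ⟨l, c, hl1, hc1, hl2, hc2, hl3, hc3, ?_⟩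
  intro u hu hne
  rcases lt_trichotomy u x with h | h | h
  · have := hl4 u ⟨hu.1, h⟩
    rw [abs_of_neg this.2]
    constructor <;> linarith [this.1, this.2]
  · exact absurd h hne
  · have := hc4 u ⟨h, hu.2⟩
    rw [abs_of_pos this.1]
    exact this

/-- stability lemma. If everywhere on `I = (a, b)` either `|f| > μ` or
`|f'| > ν`, then each zero of `f` deep inside `I` lies in an interval with endpoints
where `f` takes the values `±μ` with opposite signs, and these intervals are disjoint. -/
theorem stability_intervals
    (μ ν : ℝ) (hμ : 0 < μ) (hν : 0 < ν)
    (a b : ℝ) (hlen : 2 * μ / ν < b - a)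
    (f : ℝ → ℝ) (hf : ContDiffOn ℝ 1 f (Set.Ioo a b))
    (hrep : ∀ x ∈ Set.Ioo a b, μ < |f x| ∨ ν < |deriv f x|) :
    ∃ lo hi : ℝ → ℝ,
      (∀ x ∈ Set.Ioo a b, f x = 0 → μ / ν < x - a → μ / ν < b - x →
        lo x < x ∧ x < hi x ∧
        f (lo x) * f (hi x) < 0 ∧ |f (lo x)| = μ ∧ |f (hi x)| = μ ∧
        x - μ / ν ≤ lo x ∧ hi x ≤ x + μ / ν) ∧
      (∀ x ∈ Set.Ioo a b, ∀ y ∈ Set.Ioo a b,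
        f x = 0 → f y = 0 →
        μ / ν < x - a → μ / ν < b - x → μ / ν < y - a → μ / ν < b - y →
        x ≠ y →
        Disjoint (Set.Ioo (lo x) (hi x)) (Set.Ioo (lo y) (hi y))) := by
  have key : ∀ x : ℝ, ∃ l h : ℝ,
      x ∈ Set.Ioo a b → f x = 0 → μ / ν < x - a → μ / ν < b - x →
      (l < x ∧ x < h ∧ f l * f h < 0 ∧ |f l| = μ ∧ |f h| = μ ∧
       x - μ / ν ≤ l ∧ h ≤ x + μ / ν ∧
       ∀ u ∈ Set.Ioo l h, u ≠ x → 0 < |f u| ∧ |f u| < μ) := by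
    intro x
    by_cases H : x ∈ Set.Ioo a b ∧ f x = 0 ∧ μ / ν < x - a ∧ μ / ν < b - x
    · obtain ⟨hx, hfx, hxa, hxb⟩ := H
      have hd : ν < |deriv f x| := by
        refine (hrep x hx).resolve_left ?_
        rw [hfx, abs_zero]; linarith
      rcases le_or_gt (deriv f x) 0 with hsgn | hsgn
      · -- use g = -f
        have hg' : ν < deriv (fun t => -f t) x := by
          rw [deriv.fun_neg]
          rwa [abs_of_nonpos hsgn] at hd
        have hrepg : ∀ t ∈ Set.Ioo a b, μ < |(fun t => -f t) t| ∨
            ν < |deriv (fun t => -f t) t| := by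
          intro t ht
          have := hrep t ht
          rw [deriv.fun_neg (f := f)]
          simpa [abs_neg] using this
        obtain ⟨l, h, p1, p2, p3, p4, p5, p6, p7⟩ :=
          stability_both_sides μ ν hμ hν a b (fun t => -f t) hf.neg hrepg x hx hxa hxb
            (by simp [hfx]) hg'
        refine ⟨l, h, fun _ _ _ _ => ⟨p1, p2, ?_, ?_, ?_, p3, p4, ?_⟩⟩
        · have hfl : f l = μ := by simpa [neg_eq_iff_eq_neg] using p5
          have hfh : f h = -μ := by
            have : -f h = μ := p6
            linarith
          rw [hfl, hfh]; nlinarith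
        · have hfl : f l = μ := by simpa [neg_eq_iff_eq_neg] using p5
          rw [hfl, abs_of_pos hμ]
        · have hfh : f h = -μ := by have : -f h = μ := p6; linarith
          rw [hfh, abs_neg, abs_of_pos hμ]
        · intro u hu hne
          have := p7 u hu hne
          simpa [abs_neg] using this
      · -- use g = f
        have hg' : ν < deriv f x := by rwa [abs_of_pos hsgn] at hd
        obtain ⟨l, h, p1, p2, p3, p4, p5, p6, p7⟩ :=
          stability_both_sides μ ν hμ hν a b f hf hrep x hx hxa hxb hfx hg'
        refine ⟨l, h, fun _ _ _ _ => ⟨p1, p2, ?_, ?_, ?_, p3, p4, p7⟩⟩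
        · rw [p5, p6]; nlinarith
        · rw [p5, abs_neg, abs_of_pos hμ]
        · rw [p6, abs_of_pos hμ]
    · exact ⟨0, 0, fun h1 h2 h3 h4 => absurd ⟨h1, h2, h3, h4⟩ H⟩
  choose lo hi H using key
  have disj : ∀ x ∈ Set.Ioo a b, ∀ y ∈ Set.Ioo a b,
      f x = 0 → f y = 0 →
      μ / ν < x - a → μ / ν < b - x → μ / ν < y - a → μ / ν < b - y →
      x < y →
      Disjoint (Set.Ioo (lo x) (hi x)) (Set.Ioo (lo y) (hi y)) := by
    intro x hx y hy hfx hfy hxa hxb hya hyb hxy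
    obtain ⟨px1, px2, px3, px4, px5, px6, px7, px8⟩ := H x hx hfx hxa hxb
    obtain ⟨py1, py2, py3, py4, py5, py6, py7, py8⟩ := H y hy hfy hya hyb
    have h1 : hi x ≤ y := by
      by_contra hc
      push_neg at hc
      have hmem : y ∈ Set.Ioo (lo x) (hi x) := ⟨by linarith, hc⟩
      have := (px8 y hmem (Ne.symm (ne_of_lt hxy))).1
      rw [hfy, abs_zero] at this
      exact lt_irrefl 0 this
    have h2 : hi x ≤ lo y := by
      by_contra hc
      push_neg at hc
      have hmem : hi x ∈ Set.Ioo (lo y) (hi y) := ⟨hc, by linarith⟩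
      have hne : hi x ≠ y := by
        intro e
        rw [e, hfy, abs_zero] at px5
        linarith
      have := (py8 (hi x) hmem hne).2
      rw [px5] at this
      exact lt_irrefl μ this
    rw [Set.disjoint_left]
    intro z hz1 hz2
    have : z < hi x := hz1.2
    have : lo y < z := hz2.1
    linarith
  refine ⟨lo, hi, ?_, ?_⟩
  · intro x hx h0 h1 h2
    obtain ⟨p1, p2, p3, p4, p5, p6, p7, _⟩ := H x hx h0 h1 h2
    exact ⟨p1, p2, p3, p4, p5, p6, p7⟩
  · intro x hx y hy hfx hfy hxa hxb hya hyb hne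
    rcases lt_trichotomy x y with h | h | h
    · exact disj x hx y hy hfx hfy hxa hxb hya hyb h
    · exact absurd h hne
    · exact (disj y hy x hx hfy hfx hya hyb hxa hxb h).symm
end

section
/- Fix strictly positive numbers μ and ν. Let I = (a,b) be an interval of length at least 2μ/ν, and let f be a C¹ function on I such that at each point x ∈ I either |f(x)| > μ or |f′(x)| > ν. Let g be a function on I with |g(x)| < μ for all x ∈ I. Then there is an injective map assigning to each zero x_i ∈ I of f with x_i − a > μ/ν and b − x_i > μ/ν a zero x_i′ of f + g with x_i′ ∈ (x_i − μ/ν, x_i + μ/ν), the images of distinct such zeros being distinct. -/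
open Set

/-- If `|φ| > ν` on a connected interval, `φ` is continuous there, and `φ > ν` at one
point, then `φ > ν` everywhere on the interval. -/
private lemma sign_const {ν : ℝ} (hν : 0 ≤ ν) {φ : ℝ → ℝ} {w t : ℝ}
    (hφ : ContinuousOn φ (Set.uIcc w t))
    (h : ∀ s ∈ Set.uIcc w t, ν < |φ s|)
    (hw : ν < φ w) : ν < φ t := by
  by_contra ht
  push_neg at ht
  have ht' : φ t < -ν := by
    have := h t Set.right_mem_uIcc
    rcases abs_cases (φ t) with ⟨he, _⟩ | ⟨he, _⟩
    · linarith
    · linarith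
  have h0 : (0 : ℝ) ∈ Set.uIcc (φ w) (φ t) := by
    rw [Set.mem_uIcc]
    right
    constructor <;> linarith
  obtain ⟨s, hs, hs0⟩ := intermediate_value_uIcc hφ h0
  have := h s hs
  rw [hs0] at this
  simp at this
  linarith

/-- Points to the right of `x` where `|f| ≥ μ`. -/
private def Aset (μ ν : ℝ) (f : ℝ → ℝ) (x : ℝ) : Set ℝ :=
  {t ∈ Set.Icc x (x + μ / ν) | μ ≤ |f t|}

/-- Points to the left of `x` where `|f| ≥ μ`. -/
private def Bset (μ ν : ℝ) (f : ℝ → ℝ) (x : ℝ) : Set ℝ :=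
  {t ∈ Set.Icc (x - μ / ν) x | μ ≤ |f t|}

private lemma Aset_neg (μ ν : ℝ) (f : ℝ → ℝ) (x : ℝ) :
    Aset μ ν (fun t => -f t) x = Aset μ ν f x := by
  ext t; simp [Aset]

private lemma Bset_neg (μ ν : ℝ) (f : ℝ → ℝ) (x : ℝ) :
    Bset μ ν (fun t => -f t) x = Bset μ ν f x := by
  ext t; simp [Bset]

private lemma pos_case (μ ν : ℝ) (hμ : 0 < μ) (hν : 0 < ν)
    (a b : ℝ) (f : ℝ → ℝ) (hf : ContDiffOn ℝ 1 f (Set.Ioo a b))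
    (hrep : ∀ x ∈ Set.Ioo a b, μ < |f x| ∨ ν < |deriv f x|)
    (x : ℝ) (hax : a < x) (hxb : x < b) (hx0 : f x = 0)
    (hxa : μ / ν < x - a) (hxb' : μ / ν < b - x)
    (hd : ν < deriv f x) :
    sInf (Aset μ ν f x) ∈ Aset μ ν f x ∧ sSup (Bset μ ν f x) ∈ Bset μ ν f x ∧
    x < sInf (Aset μ ν f x) ∧ sSup (Bset μ ν f x) < x ∧
    μ ≤ f (sInf (Aset μ ν f x)) ∧ f (sSup (Bset μ ν f x)) ≤ -μ ∧
    ∀ y, x < y → y ≤ sInf (Aset μ ν f x) → f y ≠ 0 := by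
  have hmn : 0 < μ / ν := div_pos hμ hν
  have hνμ : ν * (μ / ν) = μ := by field_simp
  have hsubA : Set.Icc x (x + μ / ν) ⊆ Set.Ioo a b := by
    rintro t ⟨h1, h2⟩; constructor <;> linarith
  have hsubB : Set.Icc (x - μ / ν) x ⊆ Set.Ioo a b := by
    rintro t ⟨h1, h2⟩; constructor <;> linarith
  have hfc : ContinuousOn f (Set.Ioo a b) := hf.continuousOn
  have hfd : ContinuousOn (deriv f) (Set.Ioo a b) :=
    hf.continuousOn_deriv_of_isOpen isOpen_Ioo le_rfl
  have hdiff : ∀ t ∈ Set.Ioo a b, DifferentiableAt ℝ f t := fun t ht =>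
    (hf.differentiableOn one_ne_zero).differentiableAt (isOpen_Ioo.mem_nhds ht)
  -- if `|f| < μ` on an interval around `x`, then `deriv f > ν` on it
  have derivgt : ∀ u v, Set.Icc u v ⊆ Set.Ioo a b → x ∈ Set.Icc u v →
      (∀ t ∈ Set.Icc u v, |f t| < μ) → ∀ t ∈ Set.Icc u v, ν < deriv f t := by
    intro u v hsub hxm hband t ht
    have huIcc : Set.uIcc x t ⊆ Set.Icc u v := Set.uIcc_subset_Icc hxm ht
    refine sign_const hν.le (hfd.mono (huIcc.trans hsub)) (fun s hs => ?_) hd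
    have hs' : s ∈ Set.Icc u v := huIcc hs
    rcases hrep s (hsub hs') with h | h
    · linarith [hband s hs']
    · exact h
  -- strict monotonicity of `f - ν t` where `deriv f > ν`
  have monogt : ∀ u v, Set.Icc u v ⊆ Set.Ioo a b → (∀ t ∈ Set.Ioo u v, ν < deriv f t) →
      StrictMonoOn (fun t => f t - ν * t) (Set.Icc u v) := by
    intro u v hsub hgt
    have hcont : ContinuousOn (fun t : ℝ => f t - ν * t) (Set.Icc u v) :=
      (hfc.mono hsub).sub (by fun_prop)
    apply strictMonoOn_of_deriv_pos (convex_Icc u v) hcont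
    intro t ht
    rw [interior_Icc] at ht
    have hdt : DifferentiableAt ℝ f t := hdiff t (hsub (Set.Ioo_subset_Icc_self ht))
    have h1 : HasDerivAt (fun s => f s - ν * s) (deriv f t - ν * 1) t :=
      hdt.hasDerivAt.sub ((hasDerivAt_id t).const_mul ν)
    rw [h1.deriv]
    have := hgt t ht
    linarith
  -- strict monotonicity of `f` where `deriv f > ν`
  have monof : ∀ u v, Set.Icc u v ⊆ Set.Ioo a b → (∀ t ∈ Set.Ioo u v, ν < deriv f t) →
      StrictMonoOn f (Set.Icc u v) := by
    intro u v hsub hgt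
    exact strictMonoOn_of_deriv_pos (convex_Icc u v) (hfc.mono hsub)
      (fun t ht => by rw [interior_Icc] at ht; linarith [hgt t ht])
  have hxA : x ∈ Set.Icc x (x + μ / ν) := ⟨le_refl x, by linarith⟩
  have hxB : x ∈ Set.Icc (x - μ / ν) x := ⟨by linarith, le_refl x⟩
  -- A is nonempty
  have hAne : (Aset μ ν f x).Nonempty := by
    by_contra hA
    rw [Set.not_nonempty_iff_eq_empty] at hA
    have hband : ∀ t ∈ Set.Icc x (x + μ / ν), |f t| < μ := by
      intro t ht
      by_contra hge
      push_neg at hge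
      have : t ∈ Aset μ ν f x := ⟨ht, hge⟩
      rw [hA] at this
      exact this
    have hgt := derivgt x (x + μ / ν) hsubA hxA hband
    have hm := monogt x (x + μ / ν) hsubA (fun t ht => hgt t (Set.Ioo_subset_Icc_self ht))
    have h2 : f x - ν * x < f (x + μ / ν) - ν * (x + μ / ν) :=
      hm (Set.left_mem_Icc.2 (by linarith)) (Set.right_mem_Icc.2 (by linarith)) (by linarith)
    have hb2 := hband (x + μ / ν) (Set.right_mem_Icc.2 (by linarith))
    have hmul : ν * (x + μ / ν) = ν * x + μ := by rw [mul_add, hνμ]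
    have := le_abs_self (f (x + μ / ν))
    linarith
  -- B is nonempty
  have hBne : (Bset μ ν f x).Nonempty := by
    by_contra hB
    rw [Set.not_nonempty_iff_eq_empty] at hB
    have hband : ∀ t ∈ Set.Icc (x - μ / ν) x, |f t| < μ := by
      intro t ht
      by_contra hge
      push_neg at hge
      have : t ∈ Bset μ ν f x := ⟨ht, hge⟩
      rw [hB] at this
      exact this
    have hgt := derivgt (x - μ / ν) x hsubB hxB hband
    have hm := monogt (x - μ / ν) x hsubB (fun t ht => hgt t (Set.Ioo_subset_Icc_self ht))
    have h2 : f (x - μ / ν) - ν * (x - μ / ν) < f x - ν * x :=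
      hm (Set.left_mem_Icc.2 (by linarith)) (Set.right_mem_Icc.2 (by linarith)) (by linarith)
    have hb2 := hband (x - μ / ν) (Set.left_mem_Icc.2 (by linarith))
    have hmul : ν * (x - μ / ν) = ν * x - μ := by rw [mul_sub, hνμ]
    have := neg_abs_le (f (x - μ / ν))
    linarith
  have hAbdd : BddBelow (Aset μ ν f x) := ⟨x, fun t ht => ht.1.1⟩
  have hBbdd : BddAbove (Bset μ ν f x) := ⟨x, fun t ht => ht.1.2⟩
  have hAclosed : IsClosed (Aset μ ν f x) := by
    have : Aset μ ν f x = Set.Icc x (x + μ / ν) ∩ (fun t => |f t|) ⁻¹' Set.Ici μ := by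
      ext t; simp [Aset, Set.mem_sep_iff, and_comm]
    rw [this]
    exact ContinuousOn.preimage_isClosed_of_isClosed ((hfc.mono hsubA).abs)
      isClosed_Icc isClosed_Ici
  have hBclosed : IsClosed (Bset μ ν f x) := by
    have : Bset μ ν f x = Set.Icc (x - μ / ν) x ∩ (fun t => |f t|) ⁻¹' Set.Ici μ := by
      ext t; simp [Bset, Set.mem_sep_iff, and_comm]
    rw [this]
    exact ContinuousOn.preimage_isClosed_of_isClosed ((hfc.mono hsubB).abs)
      isClosed_Icc isClosed_Ici
  have hpA : sInf (Aset μ ν f x) ∈ Aset μ ν f x := hAclosed.csInf_mem hAne hAbdd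
  have hqB : sSup (Bset μ ν f x) ∈ Bset μ ν f x := hBclosed.csSup_mem hBne hBbdd
  set p := sInf (Aset μ ν f x) with hp
  set q := sSup (Bset μ ν f x) with hq
  have hxp : x < p := by
    rcases lt_or_eq_of_le hpA.1.1 with h | h
    · exact h
    · exfalso
      have := hpA.2
      rw [← h, hx0] at this
      simp at this
      linarith
  have hqx : q < x := by
    rcases lt_or_eq_of_le hqB.1.2 with h | h
    · exact h
    · exfalso
      have := hqB.2
      rw [h, hx0] at this
      simp at this
      linarith
  -- band below p
  have hbandp : ∀ t ∈ Set.Ico x p, |f t| < μ := by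
    intro t ht
    by_contra hge
    push_neg at hge
    have : t ∈ Aset μ ν f x := ⟨⟨ht.1, ht.2.le.trans hpA.1.2⟩, hge⟩
    have := csInf_le hAbdd this
    linarith [ht.2]
  have hbandq : ∀ t ∈ Set.Ioc q x, |f t| < μ := by
    intro t ht
    by_contra hge
    push_neg at hge
    have : t ∈ Bset μ ν f x := ⟨⟨hqB.1.1.trans ht.1.le, ht.2⟩, hge⟩
    have := le_csSup hBbdd this
    linarith [ht.1]
  -- deriv f > ν on Ioo x p and Ioo q x
  have hgtp : ∀ t ∈ Set.Ioo x p, ν < deriv f t := by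
    intro t ht
    have hsub2 : Set.Icc x t ⊆ Set.Ioo a b := fun s hs =>
      hsubA ⟨hs.1, le_trans hs.2 (le_trans ht.2.le hpA.1.2)⟩
    exact derivgt x t hsub2 (Set.left_mem_Icc.2 ht.1.le)
      (fun s hs => hbandp s ⟨hs.1, lt_of_le_of_lt hs.2 ht.2⟩) t
      (Set.right_mem_Icc.2 ht.1.le)
  have hgtq : ∀ t ∈ Set.Ioo q x, ν < deriv f t := by
    intro t ht
    have hsub2 : Set.Icc t x ⊆ Set.Ioo a b := fun s hs =>
      hsubB ⟨(hqB.1.1.trans ht.1.le).trans hs.1, hs.2⟩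
    exact derivgt t x hsub2 (Set.right_mem_Icc.2 ht.2.le)
      (fun s hs => hbandq s ⟨lt_of_lt_of_le ht.1 hs.1, hs.2⟩) t
      (Set.left_mem_Icc.2 ht.2.le)
  have hsubp : Set.Icc x p ⊆ Set.Ioo a b := fun s hs => hsubA ⟨hs.1, hs.2.trans hpA.1.2⟩
  have hsubq : Set.Icc q x ⊆ Set.Ioo a b := fun s hs => hsubB ⟨hqB.1.1.trans hs.1, hs.2⟩
  have hmonop := monof x p hsubp hgtp
  have hmonoq := monof q x hsubq hgtq
  have hfp : μ ≤ f p := by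
    have hpos : 0 < f p := by
      have := hmonop (Set.left_mem_Icc.2 hxp.le) (Set.right_mem_Icc.2 hxp.le) hxp
      rw [hx0] at this
      exact this
    have := hpA.2
    rwa [abs_of_pos hpos] at this
  have hfq : f q ≤ -μ := by
    have hneg : f q < 0 := by
      have := hmonoq (Set.left_mem_Icc.2 hqx.le) (Set.right_mem_Icc.2 hqx.le) hqx
      rw [hx0] at this
      exact this
    have := hqB.2
    rw [abs_of_neg hneg] at this
    linarith
  refine ⟨hpA, hqB, hxp, hqx, hfp, hfq, ?_⟩
  intro y hxy hyp
  have := hmonop (Set.left_mem_Icc.2 hxp.le) ⟨hxy.le, hyp⟩ hxy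
  rw [hx0] at this
  exact ne_of_gt this

private lemma main_case (μ ν : ℝ) (hμ : 0 < μ) (hν : 0 < ν)
    (a b : ℝ) (f : ℝ → ℝ) (hf : ContDiffOn ℝ 1 f (Set.Ioo a b))
    (hrep : ∀ x ∈ Set.Ioo a b, μ < |f x| ∨ ν < |deriv f x|)
    (g : ℝ → ℝ) (hg : ContinuousOn g (Set.Ioo a b))
    (hgμ : ∀ x ∈ Set.Ioo a b, |g x| < μ)
    (x : ℝ) (hax : a < x) (hxb : x < b) (hx0 : f x = 0)
    (hxa : μ / ν < x - a) (hxb' : μ / ν < b - x) :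
    sInf (Aset μ ν f x) ∈ Aset μ ν f x ∧ sSup (Bset μ ν f x) ∈ Bset μ ν f x ∧
    x < sInf (Aset μ ν f x) ∧ sSup (Bset μ ν f x) < x ∧
    (∀ y, x < y → y ≤ sInf (Aset μ ν f x) → f y ≠ 0) ∧
    ∃ z ∈ Set.Ioo (sSup (Bset μ ν f x)) (sInf (Aset μ ν f x)), f z + g z = 0 := by
  have hsubA : Set.Icc x (x + μ / ν) ⊆ Set.Ioo a b := by
    rintro t ⟨h1, h2⟩; constructor <;> linarith
  have hsubB : Set.Icc (x - μ / ν) x ⊆ Set.Ioo a b := by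
    rintro t ⟨h1, h2⟩; constructor <;> linarith
  have hd0 : ν < |deriv f x| := by
    rcases hrep x ⟨hax, hxb⟩ with h | h
    · rw [hx0] at h; simp at h; linarith
    · exact h
  have hFc : ContinuousOn (fun t => f t + g t) (Set.Ioo a b) := hf.continuousOn.add hg
  rcases abs_cases (deriv f x) with ⟨he, _⟩ | ⟨he, _⟩
  · -- deriv f x > ν
    have hd : ν < deriv f x := by rw [← he]; exact hd0
    obtain ⟨hpA, hqB, hxp, hqx, hfp, hfq, hnz⟩ :=
      pos_case μ ν hμ hν a b f hf hrep x hax hxb hx0 hxa hxb' hd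
    refine ⟨hpA, hqB, hxp, hqx, hnz, ?_⟩
    set p := sInf (Aset μ ν f x)
    set q := sSup (Bset μ ν f x)
    have hpI : p ∈ Set.Ioo a b := hsubA hpA.1
    have hqI : q ∈ Set.Ioo a b := hsubB hqB.1
    have hsub : Set.Icc q p ⊆ Set.Ioo a b := fun s hs =>
      ⟨lt_of_lt_of_le hqI.1 hs.1, lt_of_le_of_lt hs.2 hpI.2⟩
    have hFq : f q + g q < 0 := by
      have := (abs_lt.1 (hgμ q hqI)).2
      linarith
    have hFp : 0 < f p + g p := by
      have := (abs_lt.1 (hgμ p hpI)).1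
      linarith
    have h0 : (0 : ℝ) ∈ Set.Ioo (f q + g q) (f p + g p) := ⟨hFq, hFp⟩
    obtain ⟨z, hz, hz0⟩ := intermediate_value_Ioo (le_of_lt (hqx.trans hxp))
      (hFc.mono hsub) h0
    exact ⟨z, hz, hz0⟩
  · -- deriv f x < -ν
    have hd : ν < deriv (fun t => -f t) x := by
      rw [deriv.fun_neg]
      rw [he] at hd0
      exact hd0
    have hrep' : ∀ t ∈ Set.Ioo a b, μ < |(fun t => -f t) t| ∨ ν < |deriv (fun t => -f t) t| := by
      intro t ht
      rcases hrep t ht with h | h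
      · left; simpa using h
      · right; rw [deriv.fun_neg, abs_neg]; exact h
    obtain ⟨hpA, hqB, hxp, hqx, hfp, hfq, hnz⟩ :=
      pos_case μ ν hμ hν a b (fun t => -f t) hf.neg hrep' x hax hxb (by simp [hx0])
        hxa hxb' hd
    simp only [Aset_neg μ ν f x, Bset_neg μ ν f x] at hpA hqB hxp hqx hfp hfq hnz
    refine ⟨hpA, hqB, hxp, hqx, fun y h1 h2 hy0 => hnz y h1 h2 (by simp [hy0]), ?_⟩
    set p := sInf (Aset μ ν f x)
    set q := sSup (Bset μ ν f x)
    have hpI : p ∈ Set.Ioo a b := hsubA hpA.1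
    have hqI : q ∈ Set.Ioo a b := hsubB hqB.1
    have hsub : Set.Icc q p ⊆ Set.Ioo a b := fun s hs =>
      ⟨lt_of_lt_of_le hqI.1 hs.1, lt_of_le_of_lt hs.2 hpI.2⟩
    have hfp' : f p ≤ -μ := by linarith [hfp]
    have hfq' : μ ≤ f q := by have : -f q ≤ -μ := hfq; linarith
    have hFq : 0 < f q + g q := by
      have := (abs_lt.1 (hgμ q hqI)).1
      linarith
    have hFp : f p + g p < 0 := by
      have := (abs_lt.1 (hgμ p hpI)).2
      linarith
    have h0 : (0 : ℝ) ∈ Set.Ioo (f p + g p) (f q + g q) := ⟨hFp, hFq⟩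
    obtain ⟨z, hz, hz0⟩ := intermediate_value_Ioo' (le_of_lt (hqx.trans hxp))
      (hFc.mono hsub) h0
    exact ⟨z, hz, hz0⟩

/-- stability of zeros under perturbation. If everywhere on `I = (a, b)`
either `|f| > μ` or `|f'| > ν`, and `|g| < μ` on `I`, then each zero of `f` deep inside
`I` gives rise to a nearby zero of `f + g`, injectively. -/
theorem stability_perturbation
    (μ ν : ℝ) (hμ : 0 < μ) (hν : 0 < ν)
    (a b : ℝ) (hlen : 2 * μ / ν ≤ b - a)
    (f : ℝ → ℝ) (hf : ContDiffOn ℝ 1 f (Set.Ioo a b))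
    (hrep : ∀ x ∈ Set.Ioo a b, μ < |f x| ∨ ν < |deriv f x|)
    (g : ℝ → ℝ) (hg : ContinuousOn g (Set.Ioo a b))
    (hgμ : ∀ x ∈ Set.Ioo a b, |g x| < μ) :
    ∃ r : ℝ → ℝ,
      (∀ x ∈ Set.Ioo a b, f x = 0 → μ / ν < x - a → μ / ν < b - x →
        f (r x) + g (r x) = 0 ∧ r x ∈ Set.Ioo (x - μ / ν) (x + μ / ν)) ∧
      (∀ x ∈ Set.Ioo a b, ∀ y ∈ Set.Ioo a b,
        f x = 0 → f y = 0 →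
        μ / ν < x - a → μ / ν < b - x → μ / ν < y - a → μ / ν < b - y →
        x ≠ y → r x ≠ r y) := by
  classical
  set P : ℝ → Prop := fun x =>
    x ∈ Set.Ioo a b ∧ f x = 0 ∧ μ / ν < x - a ∧ μ / ν < b - x with hP
  have key : ∀ x, P x →
      sInf (Aset μ ν f x) ∈ Aset μ ν f x ∧ sSup (Bset μ ν f x) ∈ Bset μ ν f x ∧
      x < sInf (Aset μ ν f x) ∧ sSup (Bset μ ν f x) < x ∧
      (∀ y, x < y → y ≤ sInf (Aset μ ν f x) → f y ≠ 0) ∧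
      ∃ z ∈ Set.Ioo (sSup (Bset μ ν f x)) (sInf (Aset μ ν f x)), f z + g z = 0 :=
    fun x hx => main_case μ ν hμ hν a b f hf hrep g hg hgμ x hx.1.1 hx.1.2 hx.2.1
      hx.2.2.1 hx.2.2.2
  have key2 : ∀ x, P x →
      ∃ z ∈ Set.Ioo (sSup (Bset μ ν f x)) (sInf (Aset μ ν f x)), f z + g z = 0 :=
    fun x hx => (key x hx).2.2.2.2.2
  refine ⟨fun x => if h : P x then (key2 x h).choose else x, ?_, ?_⟩
  · intro x hx hx0 h1 h2
    have hPx : P x := ⟨hx, hx0, h1, h2⟩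
    have hspec := (key2 x hPx).choose_spec
    simp only [dif_pos hPx]
    refine ⟨hspec.2, ?_⟩
    have hple : sInf (Aset μ ν f x) ≤ x + μ / ν := (key x hPx).1.1.2
    have hqge : x - μ / ν ≤ sSup (Bset μ ν f x) := (key x hPx).2.1.1.1
    exact ⟨lt_of_le_of_lt hqge hspec.1.1, lt_of_lt_of_le hspec.1.2 hple⟩
  · have order : ∀ x y, P x → P y → x < y →
        (if h : P x then (key2 x h).choose else x) <
        (if h : P y then (key2 y h).choose else y) := by
      intro x y hPx hPy hxy
      rw [dif_pos hPx, dif_pos hPy]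
      have hsx := (key2 x hPx).choose_spec
      have hsy := (key2 y hPy).choose_spec
      set p := sInf (Aset μ ν f x)
      set qy := sSup (Bset μ ν f y)
      have hpy : p < y := by
        rcases lt_or_ge p y with h | h
        · exact h
        · exfalso
          exact (key x hPx).2.2.2.2.1 y hxy h hPy.2.1
      have hpabs : μ ≤ |f p| := (key x hPx).1.2
      have hpq : p ≤ qy := by
        by_cases hc : y - μ / ν ≤ p
        · exact le_csSup ⟨y, fun t ht => ht.1.2⟩ ⟨⟨hc, hpy.le⟩, hpabs⟩
        · push_neg at hc
          exact le_of_lt (lt_of_lt_of_le hc (key y hPy).2.1.1.1)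
      calc (key2 x hPx).choose < p := hsx.1.2
        _ ≤ qy := hpq
        _ < (key2 y hPy).choose := hsy.1.1
    intro x hx y hy hfx hfy h1 h2 h3 h4 hne
    have hPx : P x := ⟨hx, hfx, h1, h2⟩
    have hPy : P y := ⟨hy, hfy, h3, h4⟩
    rcases hne.lt_or_gt with h | h
    · exact ne_of_lt (order x y hPx hPy h)
    · exact ne_of_gt (order y x hPy hPx h)
end

section
/- There exists an absolute constant C > 0 such that the following holds. Let ε₀ ∈ (0, 1/2], let a < b be reals, and set a′ = a − ε₀(b−a) and b′ = b + ε₀(b−a). Then for every real polynomial f of degree at most n and every integer 1 ≤ k ≤ n, ∫_a^b (f^{(k)}(x))² dx ≤ C^k · (ε₀·(b′−a′)²)^{−k} · n^{2k} · ∫_{a′}^{b′} f(x)² dx. -/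
open Polynomial intervalIntegral MeasureTheory

noncomputable def Jint (f : ℝ[X]) : ℝ := ∫ x in (-1:ℝ)..1, f.eval x

lemma pcont (f : ℝ[X]) : Continuous (fun x : ℝ => f.eval x) := f.continuous

lemma pint (f : ℝ[X]) (a b : ℝ) : IntervalIntegrable (fun x => f.eval x) volume a b :=
  (pcont f).intervalIntegrable a b

lemma Jint_add (f g : ℝ[X]) : Jint (f + g) = Jint f + Jint g := by
  unfold Jint
  simp only [eval_add]
  exact integral_add (pint f _ _) (pint g _ _)

lemma Jint_smul (c : ℝ) (f : ℝ[X]) : Jint (c • f) = c * Jint f := by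
  unfold Jint
  simp only [eval_smul, smul_eq_mul]
  exact integral_const_mul c _

lemma Jint_zero : Jint 0 = 0 := by unfold Jint; simp

lemma Jint_neg (f : ℝ[X]) : Jint (-f) = -Jint f := by
  have := Jint_smul (-1) f
  simpa using this

lemma poly_ftc (u : ℝ[X]) : Jint (derivative u) = u.eval 1 - u.eval (-1) := by
  unfold Jint
  have h : (fun x : ℝ => (derivative u).eval x) = deriv (fun x => u.eval x) := by
    funext x; rw [Polynomial.deriv]
  rw [h]
  exact integral_deriv_eq_sub (fun x _ => u.differentiableAt) (by rw [← h]; exact pint _ _ _)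

lemma poly_ibp (u v : ℝ[X]) :
    Jint (derivative u * v) =
      (u.eval 1 * v.eval 1 - u.eval (-1) * v.eval (-1)) - Jint (u * derivative v) := by
  have h := poly_ftc (u * v)
  rw [derivative_mul, Jint_add] at h
  simp only [eval_mul] at h
  linarith
noncomputable def Wp (m : ℕ) : ℝ[X] := (1 - X ^ 2) ^ m

/-- Rodrigues companion polynomials -/
noncomputable def Rod (s : ℕ) : ℕ → ℝ[X]
  | 0 => 1
  | (i+1) => (1 - X ^ 2) * derivative (Rod s i) - C ((2 * (s - i) : ℕ) : ℝ) * (X * Rod s i)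

lemma deriv_one_sub_X_sq : derivative (1 - X ^ 2 : ℝ[X]) = -(C 2 * X) := by
  simp [derivative_X_pow]
  rw [← C_1, ← C_add]; norm_num

lemma rod_eq (s : ℕ) : ∀ i ≤ s, derivative^[i] (Wp s) = Wp (s - i) * Rod s i := by
  intro i
  induction i with
  | zero => intro _; simp [Rod, Wp]
  | succ i ih =>
    intro hi
    rw [Function.iterate_succ_apply', ih (by omega)]
    obtain ⟨t, ht⟩ : ∃ t, s - i = t + 1 := ⟨s - (i+1), by omega⟩
    have ht2 : s - (i+1) = t := by omega
    show derivative (Wp (s-i) * Rod s i) = Wp (s - (i+1)) * Rod s (i+1)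
    rw [show Rod s (i+1) = (1 - X ^ 2) * derivative (Rod s i)
        - C ((2 * (s - i) : ℕ) : ℝ) * (X * Rod s i) from rfl]
    unfold Wp
    rw [ht, ht2, derivative_mul, derivative_pow, deriv_one_sub_X_sq]
    have hc : C ((2 * (t + 1) : ℕ) : ℝ) = Polynomial.C 2 * Polynomial.C (((t+1) : ℕ) : ℝ) := by
      rw [← map_mul]; norm_num
    rw [hc, pow_succ, Nat.add_sub_cancel]
    ring
lemma rod_natDegree_le (s : ℕ) : ∀ i, (Rod s i).natDegree ≤ i := by
  intro i; induction i with
  | zero => simp [Rod]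
  | succ i ih =>
    show ((1 - X ^ 2) * derivative (Rod s i) - C _ * (X * Rod s i)).natDegree ≤ i + 1
    apply (natDegree_sub_le _ _).trans
    apply max_le
    · by_cases h : derivative (Rod s i) = 0
      · simp [h]
      · have h1 : 1 ≤ (Rod s i).natDegree := by
          by_contra hlt
          push_neg at hlt
          obtain ⟨a, ha⟩ := (natDegree_eq_zero (p := Rod s i)).mp (by omega)
          exact h (by rw [← ha]; simp)
        have h2 : (1 - X ^ 2 : ℝ[X]).natDegree ≤ 2 :=
          (natDegree_sub_le _ _).trans (by simp)
        have h3 : (derivative (Rod s i)).natDegree ≤ i - 1 :=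
          (natDegree_derivative_le _).trans (Nat.sub_le_sub_right ih 1)
        calc ((1 - X ^ 2) * derivative (Rod s i)).natDegree
            ≤ (1 - X ^ 2 : ℝ[X]).natDegree + (derivative (Rod s i)).natDegree :=
              natDegree_mul_le
          _ ≤ 2 + (i - 1) := by omega
          _ ≤ i + 1 := by omega
    · calc (C ((2 * (s - i) : ℕ) : ℝ) * (X * Rod s i)).natDegree
          ≤ (C ((2 * (s - i) : ℕ) : ℝ)).natDegree + (X * Rod s i).natDegree :=
            natDegree_mul_le
        _ ≤ 0 + (X : ℝ[X]).natDegree + (Rod s i).natDegree := by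
            have := natDegree_mul_le (p := (X : ℝ[X])) (q := Rod s i)
            simp only [natDegree_C]
            omega
        _ ≤ i + 1 := by
            have := natDegree_X_le (R := ℝ)
            omega

lemma rod_coeff_ne (s : ℕ) : ∀ i, i ≤ s → (Rod s i).coeff i ≠ 0 := by
  intro i; induction i with
  | zero => intro _; simp [Rod]
  | succ i ih =>
    intro hi
    have hR' : (derivative (Rod s i)).natDegree ≤ i - 1 :=
      (natDegree_derivative_le _).trans (Nat.sub_le_sub_right (rod_natDegree_le s i) 1)
    have e1 : ((1 - X ^ 2) * derivative (Rod s i)).coeff (i+1)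
        = -((i:ℝ) * (Rod s i).coeff i) := by
      have expand : (1 - X ^ 2) * derivative (Rod s i)
          = derivative (Rod s i) - derivative (Rod s i) * X ^ 2 := by ring
      rw [expand, coeff_sub, coeff_eq_zero_of_natDegree_lt (by omega), coeff_mul_X_pow']
      cases i with
      | zero => simp
      | succ j =>
        simp only [show j + 1 + 1 - 2 = j by omega, if_pos (by omega : 2 ≤ j + 1 + 1)]
        rw [coeff_derivative]
        push_cast
        ring
    have e2 : (C ((2 * (s - i) : ℕ) : ℝ) * (X * Rod s i)).coeff (i+1)
        = ((2 * (s - i) : ℕ) : ℝ) * (Rod s i).coeff i := by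
      rw [coeff_C_mul, coeff_X_mul]
    have hdef : Rod s (i+1) = (1 - X ^ 2) * derivative (Rod s i)
        - C ((2 * (s - i) : ℕ) : ℝ) * (X * Rod s i) := rfl
    rw [hdef, coeff_sub, e1, e2]
    have hpos : (0:ℝ) < (i:ℝ) + ((2 * (s - i) : ℕ) : ℝ) := by
      have : 1 ≤ s - i := by omega
      have h2 : (2:ℝ) ≤ ((2 * (s - i) : ℕ) : ℝ) := by
        exact_mod_cast (by omega : 2 ≤ 2 * (s - i))
      positivity
    have := ih (by omega)
    intro hcon
    apply this
    have : ((i:ℝ) + ((2 * (s - i) : ℕ) : ℝ)) * (Rod s i).coeff i = 0 := by linarith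
    rcases mul_eq_zero.mp this with h | h
    · linarith
    · exact h

lemma Wp_eval_one (m : ℕ) (hm : 1 ≤ m) : (Wp m).eval 1 = 0 := by
  simp [Wp, zero_pow (by omega : m ≠ 0)]

lemma Wp_eval_negone (m : ℕ) (hm : 1 ≤ m) : (Wp m).eval (-1) = 0 := by
  simp [Wp, zero_pow (by omega : m ≠ 0)]

lemma iter_deriv_Wp_eval (s i : ℕ) (hi : i < s) :
    (derivative^[i] (Wp s)).eval 1 = 0 ∧ (derivative^[i] (Wp s)).eval (-1) = 0 := by
  rw [rod_eq s i (by omega)]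
  constructor <;>
    simp [eval_mul, Wp_eval_one (s - i) (by omega), Wp_eval_negone (s - i) (by omega)]

lemma orth_aux (m j : ℕ) : ∀ i, i ≤ j → ∀ r : ℝ[X],
    Jint (derivative^[j] (Wp (m+j)) * r)
      = (-1:ℝ)^i * Jint (derivative^[j-i] (Wp (m+j)) * derivative^[i] r) := by
  intro i
  induction i with
  | zero => intro _ r; simp
  | succ i ih =>
    intro hi r
    rw [ih (by omega) r]
    obtain ⟨t, ht⟩ : ∃ t, j - i = t + 1 := ⟨j - (i+1), by omega⟩
    have ht2 : j - (i+1) = t := by omega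
    have hb := iter_deriv_Wp_eval (m+j) t (by omega)
    have step : Jint (derivative^[j-i] (Wp (m+j)) * derivative^[i] r)
        = - Jint (derivative^[j-(i+1)] (Wp (m+j)) * derivative^[i+1] r) := by
      rw [ht, ht2, Function.iterate_succ_apply' derivative t (Wp (m+j))]
      rw [poly_ibp (derivative^[t] (Wp (m+j))) (derivative^[i] r)]
      rw [hb.1, hb.2, Function.iterate_succ_apply' derivative i r]
      ring
    rw [step]
    ring

lemma orth0 (m j : ℕ) (r : ℝ[X]) (hr : r.natDegree < j) :
    Jint (derivative^[j] (Wp (m+j)) * r) = 0 := by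
  rw [orth_aux m j j le_rfl r, Polynomial.iterate_derivative_eq_zero hr]
  simp [Jint_zero]

noncomputable def Lop (m : ℕ) (u : ℝ[X]) : ℝ[X] :=
  (C (((m+1) : ℕ) : ℝ) * C 2) * (X * derivative u) - (1 - X ^ 2) * derivative (derivative u)

lemma key_identity (m : ℕ) (u : ℝ[X]) :
    derivative (Wp (m+1) * derivative u) = -(Wp m * Lop m u) := by
  unfold Wp Lop
  rw [derivative_mul, derivative_pow, deriv_one_sub_X_sq, Nat.add_sub_cancel, pow_succ]
  ring

lemma bparts (m : ℕ) (u v : ℝ[X]) :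
    Jint (Wp (m+1) * derivative u * derivative v) = Jint (Wp m * Lop m u * v) := by
  have h := poly_ftc (Wp (m+1) * derivative u * v)
  rw [derivative_mul, key_identity] at h
  simp only [eval_mul, Wp_eval_one (m+1) (by omega), Wp_eval_negone (m+1) (by omega),
    zero_mul, sub_zero, sub_self] at h
  rw [Jint_add] at h
  have hneg : Jint (-(Wp m * Lop m u) * v) = - Jint (Wp m * Lop m u * v) := by
    rw [neg_mul, Jint_neg]
  rw [hneg] at h
  have : Jint (Wp (m + 1) * derivative u * derivative v) = Jint (Wp m * Lop m u * v) := by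
    linarith
  exact this

lemma natDegree_one_sub_X_sq : (1 - X ^ 2 : ℝ[X]).natDegree ≤ 2 :=
  (natDegree_sub_le _ _).trans (by simp)

lemma Lop_natDegree_le (m : ℕ) (u : ℝ[X]) (n : ℕ) (hu : u.natDegree ≤ n) :
    (Lop m u).natDegree ≤ n := by
  unfold Lop
  apply (natDegree_sub_le _ _).trans
  apply max_le
  · by_cases h : derivative u = 0
    · simp [h]
    · have h1 : 1 ≤ u.natDegree := by
        by_contra hlt
        push_neg at hlt
        obtain ⟨a, ha⟩ := (natDegree_eq_zero (p := u)).mp (by omega)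
        exact h (by rw [← ha]; simp)
      have h3 : (derivative u).natDegree ≤ n - 1 :=
        (natDegree_derivative_le _).trans (Nat.sub_le_sub_right hu 1)
      calc ((C (((m+1) : ℕ) : ℝ) * C 2) * (X * derivative u)).natDegree
          ≤ (C (((m+1) : ℕ) : ℝ) * C 2).natDegree + (X * derivative u).natDegree :=
            natDegree_mul_le
        _ ≤ 0 + (X : ℝ[X]).natDegree + (derivative u).natDegree := by
            have := natDegree_mul_le (p := (X : ℝ[X])) (q := derivative u)
            have hC : (C (((m+1) : ℕ) : ℝ) * C 2).natDegree = 0 := by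
              rw [← map_mul]; exact natDegree_C _
            omega
        _ ≤ n := by
            have := natDegree_X_le (R := ℝ)
            omega
  · by_cases h : derivative (derivative u) = 0
    · simp [h]
    · have h1 : 1 ≤ (derivative u).natDegree := by
        by_contra hlt
        push_neg at hlt
        obtain ⟨a, ha⟩ := (natDegree_eq_zero (p := derivative u)).mp (by omega)
        exact h (by rw [← ha]; simp)
      have h2 : 2 ≤ u.natDegree := by
        have := natDegree_derivative_le u
        omega
      have h3 : (derivative (derivative u)).natDegree ≤ n - 2 := by
        have a1 := natDegree_derivative_le u
        have a2 := natDegree_derivative_le (derivative u)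
        omega
      calc ((1 - X ^ 2) * derivative (derivative u)).natDegree
          ≤ (1 - X ^ 2 : ℝ[X]).natDegree + (derivative (derivative u)).natDegree :=
            natDegree_mul_le
        _ ≤ n := by
            have := natDegree_one_sub_X_sq
            omega

lemma Lop_coeff_top (m : ℕ) (u : ℝ[X]) (t : ℕ) (ht : 1 ≤ t) (hu : u.natDegree ≤ t) :
    (Lop m u).coeff t = ((t:ℝ) * ((t:ℝ) + 2*(m:ℝ) + 1)) * u.coeff t := by
  obtain ⟨t', rfl⟩ : ∃ t', t = t' + 1 := ⟨t - 1, by omega⟩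
  unfold Lop
  rw [coeff_sub]
  have e1 : ((C (((m+1) : ℕ) : ℝ) * C 2) * (X * derivative u)).coeff (t'+1)
      = (2*(m:ℝ)+2) * (u.coeff (t'+1) * ((t':ℝ)+1)) := by
    rw [← map_mul, coeff_C_mul, coeff_X_mul, coeff_derivative]
    push_cast
    ring
  have e2 : ((1 - X ^ 2) * derivative (derivative u)).coeff (t'+1)
      = -(u.coeff (t'+1) * ((t':ℝ)+1) * (t':ℝ)) := by
    have expand : (1 - X ^ 2) * derivative (derivative u)
        = derivative (derivative u) - derivative (derivative u) * X ^ 2 := by ring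
    have hdd : (derivative (derivative u)).coeff (t'+1) = 0 := by
      apply coeff_eq_zero_of_natDegree_lt
      have a1 := natDegree_derivative_le u
      have a2 := natDegree_derivative_le (derivative u)
      omega
    rw [expand, coeff_sub, hdd, coeff_mul_X_pow']
    cases t' with
    | zero => simp
    | succ v =>
      simp only [show v + 1 + 1 - 2 = v by omega, if_pos (by omega : 2 ≤ v + 1 + 1)]
      rw [coeff_derivative, coeff_derivative]
      push_cast
      ring
  rw [e1, e2]
  push_cast
  ring

lemma natDegree_lt_of_coeff (w : ℝ[X]) (j : ℕ) (h1 : w.natDegree ≤ j) (h2 : w.coeff j = 0)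
    (hj : 1 ≤ j) : w.natDegree < j := by
  by_cases hw : w = 0
  · rw [hw]; simp; omega
  · rcases lt_or_eq_of_le h1 with h | h
    · exact h
    · exfalso
      have : w.leadingCoeff = 0 := by rw [leadingCoeff, h]; exact h2
      exact hw (leadingCoeff_eq_zero.mp this)

lemma Jint_sq_nonneg (m : ℕ) (q : ℝ[X]) : 0 ≤ Jint (Wp m * q ^ 2) := by
  unfold Jint
  apply intervalIntegral.integral_nonneg (by norm_num : (-1:ℝ) ≤ 1)
  intro x hx
  simp only [eval_mul, eval_pow, Wp, eval_sub, eval_one, eval_X]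
  apply mul_nonneg
  · apply pow_nonneg
    rcases Set.mem_Icc.mp hx with ⟨h1, h2⟩
    nlinarith
  · positivity

lemma KL (m : ℕ) : ∀ n, ∀ q : ℝ[X], q.natDegree ≤ n →
    Jint (Wp (m+1) * derivative q ^ 2)
      ≤ ((n:ℝ) * ((n:ℝ) + 2*(m:ℝ) + 1)) * Jint (Wp m * q ^ 2) := by
  intro n
  induction n with
  | zero =>
    intro q hq
    obtain ⟨a, ha⟩ := (natDegree_eq_zero (p := q)).mp (by omega)
    rw [← ha]
    simp [Jint_zero]
  | succ n ih =>
    intro q hq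
    set j := n + 1 with hjdef
    set s := m + j with hsdef
    set g := Rod s j with hgdef
    have hg : derivative^[j] (Wp s) = Wp m * g := by
      rw [rod_eq s j (by omega), show s - j = m by omega]
    have hgd : g.natDegree ≤ j := rod_natDegree_le s j
    have hgc : g.coeff j ≠ 0 := rod_coeff_ne s j (by omega)
    set c := q.coeff j / g.coeff j with hcdef
    set r := q - C c * g with hrdef
    have hr : r.natDegree ≤ n := by
      rw [natDegree_le_iff_coeff_eq_zero]
      intro t hts
      rw [hrdef, coeff_sub, coeff_C_mul]
      rcases Nat.eq_or_lt_of_le (show j ≤ t by omega) with h' | h'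
      · rw [← h', hcdef]
        field_simp
        ring
      · rw [coeff_eq_zero_of_natDegree_lt (by omega),
            coeff_eq_zero_of_natDegree_lt (by omega)]
        ring
    have hqrg : q = r + C c * g := by rw [hrdef]; ring
    have horth : ∀ w : ℝ[X], w.natDegree < j → Jint (Wp m * g * w) = 0 := by
      intro w hw
      have := orth0 m j w hw
      rw [show m + j = s from rfl, hg] at this
      exact this
    -- (1) decomposition of the right-hand integral
    have hsq : Wp m * q ^ 2
        = Wp m * r ^ 2 + (2*c) • (Wp m * g * r) + (c^2) • (Wp m * g ^ 2) := by
      rw [hqrg]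
      simp only [Polynomial.smul_eq_C_mul, map_mul, map_pow, map_ofNat]
      ring
    have hI1 : Jint (Wp m * q ^ 2)
        = Jint (Wp m * r ^ 2) + c^2 * Jint (Wp m * g ^ 2) := by
      rw [hsq, Jint_add, Jint_add, Jint_smul, Jint_smul, horth r (by omega)]
      ring
    -- (2) decomposition of the left-hand integral
    have hdq : derivative q = derivative r + C c * derivative g := by
      rw [hqrg]; simp [derivative_mul]
    have hsq2 : Wp (m+1) * derivative q ^ 2
        = Wp (m+1) * derivative r ^ 2
          + (2*c) • (Wp (m+1) * derivative r * derivative g)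
          + (c^2) • (Wp (m+1) * derivative g * derivative g) := by
      rw [hdq]
      simp only [Polynomial.smul_eq_C_mul, map_mul, map_pow, map_ofNat]
      ring
    -- cross term vanishes
    have hcross : Jint (Wp (m+1) * derivative r * derivative g) = 0 := by
      rw [bparts m r g]
      have hLr : (Lop m r).natDegree < j := by
        have := Lop_natDegree_le m r n hr
        omega
      have := horth (Lop m r) hLr
      rw [show Wp m * Lop m r * g = Wp m * g * Lop m r by ring]
      exact this
    -- diagonal term
    have lam : ℝ := 0
    have hdiag : Jint (Wp (m+1) * derivative g * derivative g)
        = ((j:ℝ) * ((j:ℝ) + 2*(m:ℝ) + 1)) * Jint (Wp m * g ^ 2) := by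
      rw [bparts m g g]
      set lj : ℝ := (j:ℝ) * ((j:ℝ) + 2*(m:ℝ) + 1) with hljdef
      have hsplit : Lop m g = C lj * g + (Lop m g - C lj * g) := by ring
      have hwdeg : (Lop m g - C lj * g).natDegree < j := by
        apply natDegree_lt_of_coeff _ _ _ _ (by omega)
        · apply (natDegree_sub_le _ _).trans
          apply max_le (Lop_natDegree_le m g j hgd)
          calc (C lj * g).natDegree ≤ (C lj).natDegree + g.natDegree := natDegree_mul_le
            _ ≤ j := by rw [natDegree_C]; omega
        · rw [coeff_sub, coeff_C_mul, Lop_coeff_top m g j (by omega) hgd]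
          ring
      have expand : Wp m * Lop m g * g
          = lj • (Wp m * g ^ 2) + (Wp m * g * (Lop m g - C lj * g)) := by
        simp only [Polynomial.smul_eq_C_mul]
        ring
      rw [expand, Jint_add, Jint_smul, horth _ hwdeg]
      ring
    have hI2 : Jint (Wp (m+1) * derivative q ^ 2)
        = Jint (Wp (m+1) * derivative r ^ 2)
          + c^2 * (((j:ℝ) * ((j:ℝ) + 2*(m:ℝ) + 1)) * Jint (Wp m * g ^ 2)) := by
      rw [hsq2, Jint_add, Jint_add, Jint_smul, Jint_smul, hcross, hdiag]
      ring
    -- combine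
    have hih := ih r hr
    have hnng : 0 ≤ Jint (Wp m * g ^ 2) := Jint_sq_nonneg m g
    have hnnr : 0 ≤ Jint (Wp m * r ^ 2) := Jint_sq_nonneg m r
    have hlam : ((n:ℝ) * ((n:ℝ) + 2*(m:ℝ) + 1)) ≤ ((j:ℝ) * ((j:ℝ) + 2*(m:ℝ) + 1)) := by
      have : (j:ℝ) = (n:ℝ) + 1 := by rw [hjdef]; push_cast; ring
      rw [this]
      nlinarith [Nat.cast_nonneg (α := ℝ) n, Nat.cast_nonneg (α := ℝ) m]
    rw [hI2, hI1]
    have hcsq : (0:ℝ) ≤ c^2 := sq_nonneg c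
    nlinarith [mul_le_mul_of_nonneg_left hlam hnnr]

lemma core_iter (n : ℕ) (q : ℝ[X]) (hq : q.natDegree ≤ n) :
    ∀ k, k ≤ n →
    Jint (Wp k * (derivative^[k] q) ^ 2) ≤ ((3:ℝ) * (n:ℝ)^2)^k * Jint (q ^ 2) := by
  intro k
  induction k with
  | zero =>
    intro _
    simp [Wp, Function.iterate_zero]
  | succ k ihk =>
    intro hk
    have hdq : (derivative^[k] q).natDegree ≤ n :=
      (Polynomial.natDegree_iterate_derivative q k).trans (by omega)
    have h1 := KL k n (derivative^[k] q) hdq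
    rw [Function.iterate_succ_apply']
    have hc1 : (n:ℝ) * ((n:ℝ) + 2*(k:ℝ) + 1) ≤ 3 * (n:ℝ)^2 := by
      have hkn : (k:ℝ) + 1 ≤ (n:ℝ) := by exact_mod_cast hk
      nlinarith [Nat.cast_nonneg (α := ℝ) n]
    have hnn : 0 ≤ Jint (Wp k * (derivative^[k] q) ^ 2) := Jint_sq_nonneg _ _
    calc Jint (Wp (k+1) * derivative (derivative^[k] q) ^ 2)
        ≤ ((n:ℝ) * ((n:ℝ) + 2*(k:ℝ) + 1)) * Jint (Wp k * (derivative^[k] q) ^ 2) := h1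
      _ ≤ (3 * (n:ℝ)^2) * Jint (Wp k * (derivative^[k] q) ^ 2) :=
          mul_le_mul_of_nonneg_right hc1 hnn
      _ ≤ (3 * (n:ℝ)^2) * (((3:ℝ) * (n:ℝ)^2)^k * Jint (q ^ 2)) :=
          mul_le_mul_of_nonneg_left (ihk (by omega)) (by positivity)
      _ = ((3:ℝ) * (n:ℝ)^2)^(k+1) * Jint (q ^ 2) := by rw [pow_succ]; ring

lemma iterated_deriv_poly (p : ℝ[X]) (k : ℕ) :
    iteratedDeriv k (fun y => p.eval y) = fun x => (derivative^[k] p).eval x := by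
  induction k with
  | zero => simp
  | succ k ih =>
    rw [iteratedDeriv_succ, ih, Function.iterate_succ_apply']
    funext x
    rw [Polynomial.deriv]

lemma iter_deriv_comp (p : ℝ[X]) (c s : ℝ) (k : ℕ) :
    derivative^[k] (p.comp (C c + C s * X))
      = C (s^k) * ((derivative^[k] p).comp (C c + C s * X)) := by
  induction k with
  | zero => simp
  | succ k ih =>
    rw [Function.iterate_succ_apply', ih, derivative_mul, derivative_C, Polynomial.derivative_comp]
    have : derivative (C c + C s * X) = C s := by simp
    rw [this, Function.iterate_succ_apply', pow_succ, map_mul]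
    ring

set_option maxHeartbeats 1000000 in
/-- iterated L² Bernstein-type inequality for polynomials, on an interval
`[a,b]` compared with its `ε₀`-enlargement `[a′,b′]`. -/
theorem iterated_bernstein :
    ∃ C : ℝ, 0 < C ∧
    ∀ ε₀ : ℝ, 0 < ε₀ → ε₀ ≤ 1 / 2 →
    ∀ a b : ℝ, a < b →
    ∀ (n : ℕ) (p : Polynomial ℝ), p.natDegree ≤ n →
    ∀ k : ℕ, 1 ≤ k → k ≤ n →
      (∫ x in Set.Icc a b, (iteratedDeriv k (fun y => p.eval y) x) ^ 2) ≤
        C ^ k * ((ε₀ * ((b + ε₀ * (b - a)) - (a - ε₀ * (b - a))) ^ 2) ^ k)⁻¹ *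
          (n : ℝ) ^ (2 * k) *
          ∫ x in Set.Icc (a - ε₀ * (b - a)) (b + ε₀ * (b - a)), (p.eval x) ^ 2 := by
  refine ⟨12, by norm_num, ?_⟩
  intro ε₀ he0 he1 a b hab n p hp k hk1 hkn
  set δ : ℝ := b - a with hδdef
  have hδ0 : 0 < δ := sub_pos.mpr hab
  set a' : ℝ := a - ε₀ * δ with ha'def
  set b' : ℝ := b + ε₀ * δ with hb'def
  set L : ℝ := b' - a' with hLdef
  have hL : L = (1 + 2*ε₀) * δ := by rw [hLdef, hb'def, ha'def]; ring
  have hL0 : 0 < L := by rw [hL]; positivity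
  set sc : ℝ := L / 2 with hscdef
  have hsc : 0 < sc := by positivity
  have hsc' : sc ≠ 0 := ne_of_gt hsc
  set ctr : ℝ := (a + b) / 2 with hctrdef
  set t : ℝ := δ / L with htdef
  have ht0 : 0 < t := by positivity
  have ht1 : t ≤ 1 := by
    rw [htdef, div_le_one hL0, hL]
    nlinarith
  have htL : t * L = δ := by rw [htdef]; field_simp
  have htt : ε₀ ≤ 1 - t^2 := by
    have ht' : t * (1 + 2*ε₀) = 1 := by
      have h0 : t * L = δ := htL
      rw [hL] at h0
      have hδ' : δ ≠ 0 := ne_of_gt hδ0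
      have h2 : (t * (1 + 2*ε₀)) * δ = 1 * δ := by rw [one_mul]; nlinarith [h0]
      exact mul_right_cancel₀ hδ' h2
    nlinarith [sq_nonneg t, sq_nonneg (1 + 2*ε₀), he0, he1, ht0]
  -- endpoint identities
  have e1 : sc * (-t) + ctr = a := by
    rw [hscdef, hctrdef, htdef]
    field_simp
    rw [hδdef]; ring
  have e2 : sc * t + ctr = b := by
    rw [hscdef, hctrdef, htdef]
    field_simp
    rw [hδdef]; ring
  have e3 : sc * (-1) + ctr = a' := by
    rw [hscdef, hctrdef, ha'def, hL, hδdef]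
    ring
  have e4 : sc * 1 + ctr = b' := by
    rw [hscdef, hctrdef, hb'def, hL, hδdef]
    ring
  set K : ℝ[X] := derivative^[k] p with hKdef
  set q : ℝ[X] := p.comp (C ctr + C sc * X) with hqdef
  have hqdeg : q.natDegree ≤ n := by
    rw [hqdef, natDegree_comp]
    have h1 : (C ctr + C sc * X).natDegree ≤ 1 := by
      apply (natDegree_add_le _ _).trans
      apply max_le (by simp)
      apply (natDegree_mul_le).trans
      simp
    calc p.natDegree * (C ctr + C sc * X).natDegree ≤ n * 1 := Nat.mul_le_mul hp h1
      _ = n := by omega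
  set G : ℝ[X] := (derivative^[k] q) ^ 2 with hGdef
  have hGev : ∀ u : ℝ, G.eval u = (sc^k)^2 * ((K^2).eval (sc*u + ctr)) := by
    intro u
    rw [hGdef, hqdef, iter_deriv_comp, hKdef]
    simp only [eval_pow, eval_mul, eval_C, eval_comp, eval_add, eval_X]
    ring
  have hG0 : ∀ u : ℝ, 0 ≤ G.eval u := by
    intro u
    rw [hGdef]
    simp only [eval_pow]
    positivity
  -- conversions of the two set integrals
  have hIcc1 : (∫ x in Set.Icc a b, (iteratedDeriv k (fun y => p.eval y) x) ^ 2)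
      = ∫ x in a..b, (K^2).eval x := by
    simp only [iterated_deriv_poly p k, ← hKdef, eval_pow]
    rw [MeasureTheory.integral_Icc_eq_integral_Ioc,
      ← intervalIntegral.integral_of_le (le_of_lt hab)]
  have hIcc2 : (∫ x in Set.Icc a' b', (p.eval x) ^ 2) = ∫ x in a'..b', (p^2).eval x := by
    simp only [eval_pow]
    have : a' ≤ b' := by rw [ha'def, hb'def]; nlinarith
    rw [MeasureTheory.integral_Icc_eq_integral_Ioc, ← intervalIntegral.integral_of_le this]
  -- substitutions
  have hsub1 : (∫ u in (-t)..t, (K^2).eval (sc*u + ctr))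
      = sc⁻¹ * ∫ x in a..b, (K^2).eval x := by
    have h := intervalIntegral.integral_comp_mul_add (a := -t) (b := t)
      (fun x => (K^2).eval x) hsc' ctr
    rw [e1, e2] at h
    simpa [smul_eq_mul] using h
  have hsub2 : (∫ u in (-1:ℝ)..1, (p^2).eval (sc*u + ctr))
      = sc⁻¹ * ∫ x in a'..b', (p^2).eval x := by
    have h := intervalIntegral.integral_comp_mul_add (a := (-1:ℝ)) (b := 1)
      (fun x => (p^2).eval x) hsc' ctr
    rw [e3, e4] at h
    simpa [smul_eq_mul] using h
  have hq2ev : ∀ u : ℝ, (q^2).eval u = (p^2).eval (sc*u + ctr) := by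
    intro u
    rw [hqdef]
    simp only [eval_pow, eval_comp, eval_add, eval_C, eval_mul, eval_X]
    ring_nf
  have hJq : Jint (q^2) = sc⁻¹ * ∫ x in a'..b', (p^2).eval x := by
    unfold Jint
    rw [← hsub2]
    congr 1
    funext u
    exact hq2ev u
  -- main chain on [-t,t] and [-1,1]
  set JG : ℝ := ∫ u in (-t)..t, G.eval u with hJGdef
  have step3 : JG ≤ (ε₀^k)⁻¹ * ∫ u in (-t)..t, (Wp k * G).eval u := by
    rw [← intervalIntegral.integral_const_mul]
    apply intervalIntegral.integral_mono_on (by linarith) (pint G _ _)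
      ((pint (Wp k * G) (-t) t).const_mul _)
    intro u hu
    rcases Set.mem_Icc.mp hu with ⟨h1, h2⟩
    have hu2 : u^2 ≤ t^2 := by nlinarith
    have hw : ε₀ ≤ 1 - u^2 := by nlinarith
    have hwk : ε₀^k ≤ (1-u^2)^k := pow_le_pow_left₀ (le_of_lt he0) hw k
    have hWev : (Wp k * G).eval u = (1-u^2)^k * G.eval u := by
      simp [Wp, eval_mul, eval_pow]
    rw [hWev]
    calc G.eval u = (ε₀^k)⁻¹ * (ε₀^k * G.eval u) := by field_simp
      _ ≤ (ε₀^k)⁻¹ * ((1-u^2)^k * G.eval u) := by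
          apply mul_le_mul_of_nonneg_left
            (mul_le_mul_of_nonneg_right hwk (hG0 u)) (by positivity)
  have step4 : (∫ u in (-t)..t, (Wp k * G).eval u) ≤ Jint (Wp k * G) := by
    unfold Jint
    apply intervalIntegral.integral_mono_interval (by linarith) (by linarith) ht1
    · apply (MeasureTheory.ae_restrict_iff' measurableSet_Ioc).mpr
      apply MeasureTheory.ae_of_all
      intro x hx
      rcases Set.mem_Ioc.mp hx with ⟨h1, h2⟩
      have hWev : (Wp k * G).eval x = (1-x^2)^k * G.eval x := by
        simp [Wp, eval_mul, eval_pow]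
      have : (0:ℝ) ≤ (Wp k * G).eval x := by
        rw [hWev]
        exact mul_nonneg (pow_nonneg (by nlinarith) k) (hG0 x)
      simpa using this
    · exact pint _ _ _
  have step5 : Jint (Wp k * G) ≤ ((3:ℝ) * (n:ℝ)^2)^k * Jint (q^2) := by
    rw [hGdef]
    exact core_iter n q hqdeg k hkn
  -- relate JG to the LHS
  have hJGA : JG = (sc^k)^2 * (sc⁻¹ * ∫ x in a..b, (K^2).eval x) := by
    rw [hJGdef, ← hsub1, ← intervalIntegral.integral_const_mul]
    congr 1
    funext u
    exact hGev u
  have hA : (∫ x in a..b, (K^2).eval x) = sc * ((sc^k)^2)⁻¹ * JG := by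
    rw [hJGA]
    field_simp
  -- combine all inequalities
  set I' : ℝ := ∫ x in a'..b', (p^2).eval x with hI'def
  have hchain : JG ≤ (ε₀^k)⁻¹ * (((3:ℝ) * (n:ℝ)^2)^k * (sc⁻¹ * I')) := by
    calc JG ≤ (ε₀^k)⁻¹ * ∫ u in (-t)..t, (Wp k * G).eval u := step3
      _ ≤ (ε₀^k)⁻¹ * Jint (Wp k * G) :=
          mul_le_mul_of_nonneg_left step4 (by positivity)
      _ ≤ (ε₀^k)⁻¹ * (((3:ℝ) * (n:ℝ)^2)^k * Jint (q^2)) :=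
          mul_le_mul_of_nonneg_left step5 (by positivity)
      _ = (ε₀^k)⁻¹ * (((3:ℝ) * (n:ℝ)^2)^k * (sc⁻¹ * I')) := by rw [hJq]
  rw [hIcc1, hIcc2]
  calc (∫ x in a..b, (K^2).eval x)
      = sc * ((sc^k)^2)⁻¹ * JG := hA
    _ ≤ sc * ((sc^k)^2)⁻¹ * ((ε₀^k)⁻¹ * (((3:ℝ) * (n:ℝ)^2)^k * (sc⁻¹ * I'))) :=
        mul_le_mul_of_nonneg_left hchain (by positivity)
    _ = (12:ℝ)^k * ((ε₀ * L^2)^k)⁻¹ * (n:ℝ)^(2*k) * I' := by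
        have h12 : (12:ℝ)^k = 3^k * 4^k := by rw [← mul_pow]; norm_num
        have hmul : ((ε₀ * L^2)^k)⁻¹ = (ε₀^k)⁻¹ * ((L^2)^k)⁻¹ := by rw [mul_pow, mul_inv]
        have hn : ((n:ℝ))^(2*k) = ((n:ℝ)^2)^k := by rw [pow_mul]
        have h3 : ((3:ℝ) * (n:ℝ)^2)^k = 3^k * ((n:ℝ)^2)^k := mul_pow _ _ _
        have hsck : (sc^k)^2 = (L^2)^k / 4^k := by
          rw [hscdef, show ((L/2)^k)^2 = ((L/2)^2)^k from pow_right_comm _ _ _,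
            div_pow, div_pow]
          norm_num
        have h4 : (0:ℝ) < 4^k := by positivity
        have hLk : (0:ℝ) < (L^2)^k := by positivity
        have hek : (0:ℝ) < ε₀^k := by positivity
        rw [h12, hmul, hn, h3, hsck]
        field_simp
end

section
/- There exist absolute constants c₁, c₂ > 0 and x₀ > 0 such that for all real x ≥ x₀ the following hold. (i) If i is a positive integer with i = x² + t and L = |t|/x ≤ x^{1/3}, then c₁^{−1}·x^{−1/2}·exp(−c₁L²) ≤ e^{−x²/2}·x^i/√(i!) ≤ c₂^{−1}·x^{−1/2}·exp(−c₂L²). (ii) If L > 0 and i is a positive integer with i ≤ x² − Lx or i ≥ x² + Lx, then e^{−x²/2}·x^i/√(i!) ≤ c₂^{−1}·x^{−1/2}·exp(−c₂·min(L², x^{2/3})). -/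
open Real


lemma stirling_ge (n : ℕ) (hn : 1 ≤ n) : Real.sqrt π ≤ Stirling.stirlingSeq n := by
  obtain ⟨m, rfl⟩ := Nat.exists_eq_add_of_le hn
  have := Antitone.le_of_tendsto Stirling.stirlingSeq'_antitone
    (Stirling.tendsto_stirlingSeq_sqrt_pi.comp (Filter.tendsto_add_atTop_nat 1)) m
  simpa [Function.comp, Nat.succ_eq_add_one, Nat.add_comm] using this

lemma stirling_le (n : ℕ) (hn : 1 ≤ n) : Stirling.stirlingSeq n ≤ 2 := by
  obtain ⟨m, rfl⟩ := Nat.exists_eq_add_of_le hn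
  have h := Stirling.stirlingSeq'_antitone (Nat.zero_le m)
  simp only [Function.comp] at h
  calc Stirling.stirlingSeq (1 + m) = Stirling.stirlingSeq (m + 1) := by ring_nf
    _ ≤ Stirling.stirlingSeq (0 + 1) := h
    _ = Real.exp 1 / Real.sqrt 2 := by norm_num [Stirling.stirlingSeq_one]
    _ ≤ 2 := by
        rw [div_le_iff₀ (by positivity)]
        have h1 : Real.exp 1 < 2.7182818286 := Real.exp_one_lt_d9
        have h2 : (1.4 : ℝ) ≤ Real.sqrt 2 := by
          rw [show (1.4:ℝ) = Real.sqrt (1.4^2) by rw [Real.sqrt_sq]; norm_num]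
          exact Real.sqrt_le_sqrt (by norm_num)
        nlinarith

lemma factorial_bounds (n : ℕ) (hn : 1 ≤ n) :
    Real.sqrt (2*n) * ((n:ℝ) / Real.exp 1) ^ n ≤ (Nat.factorial n : ℝ) ∧
    (Nat.factorial n : ℝ) ≤ 2 * (Real.sqrt (2*n) * ((n:ℝ) / Real.exp 1) ^ n) := by
  have hS : 0 < Real.sqrt (2*n) * ((n:ℝ) / Real.exp 1) ^ n := by
    have : (0:ℝ) < n := by exact_mod_cast hn
    positivity
  have hdef : Stirling.stirlingSeq n = (Nat.factorial n : ℝ) / (Real.sqrt (2*n) * ((n:ℝ)/Real.exp 1)^n) := rfl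
  have h1 := stirling_ge n hn
  have h2 := stirling_le n hn
  rw [hdef] at h1 h2
  have hπ : (1:ℝ) ≤ Real.sqrt π := by
    rw [show (1:ℝ) = Real.sqrt 1 by simp]
    exact Real.sqrt_le_sqrt (by linarith [Real.pi_gt_three])
  constructor
  · have := le_trans hπ h1
    rw [le_div_iff₀ hS] at this; linarith
  · rw [div_le_iff₀ hS] at h2; linarith


noncomputable def phiW (u : ℝ) : ℝ := (1+u) * Real.log (1+u) - u

lemma hasDerivAt_phiW (u : ℝ) (hu : -1 < u) : HasDerivAt phiW (Real.log (1+u)) u := by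
  have h1 : (0:ℝ) < 1 + u := by linarith
  have hlog : HasDerivAt (fun v : ℝ => Real.log (1+v)) (1/(1+u)) u := by
    exact ((Real.hasDerivAt_log h1.ne').comp u ((hasDerivAt_id u).const_add 1)).congr_deriv (by simp)
  have hmul : HasDerivAt (fun v : ℝ => (1+v) * Real.log (1+v))
      (1 * Real.log (1+u) + (1+u) * (1/(1+u))) u :=
    ((hasDerivAt_id u).const_add 1).mul hlog
  have := hmul.sub (hasDerivAt_id u)
  refine this.congr_deriv ?_
  rw [one_div, mul_inv_cancel₀ h1.ne']; ring

lemma log_ge_one_sub_inv {y : ℝ} (hy : 0 < y) : 1 - 1/y ≤ Real.log y := by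
  have := Real.log_le_sub_one_of_pos (show (0:ℝ) < 1/y by positivity)
  rw [Real.log_div one_ne_zero hy.ne', Real.log_one] at this
  linarith

lemma log_ge_frac {v : ℝ} (hv : -1 < v) : v/(1+v) ≤ Real.log (1+v) := by
  have h1 : (0:ℝ) < 1 + v := by linarith
  have := log_ge_one_sub_inv h1
  have h2 : 1 - 1/(1+v) = v/(1+v) := by field_simp; ring
  linarith [h2 ▸ this]

lemma log_le' {v : ℝ} (hv : -1 < v) : Real.log (1+v) ≤ v := by
  have := Real.log_le_sub_one_of_pos (show (0:ℝ) < 1+v by linarith)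
  linarith

lemma hasDerivAt_g1 (v : ℝ) (hv : -1 < v) :
    HasDerivAt (fun v => phiW v - v^2/4) (Real.log (1+v) - v/2) v := by
  have := (hasDerivAt_phiW v hv).sub ((hasDerivAt_pow 2 v).div_const 4)
  refine this.congr_deriv ?_
  norm_num; ring

lemma hasDerivAt_g2 (v : ℝ) (hv : -1 < v) :
    HasDerivAt (fun v => v^2 - phiW v) (2*v - Real.log (1+v)) v := by
  have := (hasDerivAt_pow 2 v).sub (hasDerivAt_phiW v hv)
  refine this.congr_deriv ?_
  norm_num


-- u²/4 ≤ φ(u) for -1 < u ≤ 1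
lemma phi_lower {u : ℝ} (h1 : -1 < u) (h2 : u ≤ 1) : u^2/4 ≤ phiW u := by
  rcases le_or_gt 0 u with h0 | h0
  · have key : MonotoneOn (fun v => phiW v - v^2/4) (Set.Icc 0 u) := by
      apply monotoneOn_of_deriv_nonneg (convex_Icc 0 u)
      · intro v hv
        exact (hasDerivAt_g1 v (by simp at hv; linarith [hv.1])).continuousAt.continuousWithinAt
      · intro v hv
        rw [interior_Icc] at hv
        exact (hasDerivAt_g1 v (by linarith [hv.1])).differentiableAt.differentiableWithinAt
      · intro v hv
        rw [interior_Icc] at hv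
        have hv1 : -1 < v := by linarith [hv.1]
        rw [(hasDerivAt_g1 v hv1).deriv]
        have hlg := log_ge_frac hv1
        have hv2 : v/2 ≤ v/(1+v) := by
          rw [div_le_div_iff₀ (by norm_num) (by linarith)]
          nlinarith [hv.1.le, hv.2.le, h2]
        linarith
    have := key (Set.left_mem_Icc.2 h0) (Set.right_mem_Icc.2 h0) h0
    simp only [phiW] at this ⊢
    simp at this
    nlinarith [this]
  · have key : AntitoneOn (fun v => phiW v - v^2/4) (Set.Icc u 0) := by
      apply antitoneOn_of_deriv_nonpos (convex_Icc u 0)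
      · intro v hv
        exact (hasDerivAt_g1 v (by simp at hv; linarith [hv.1])).continuousAt.continuousWithinAt
      · intro v hv
        rw [interior_Icc] at hv
        exact (hasDerivAt_g1 v (by linarith [hv.1])).differentiableAt.differentiableWithinAt
      · intro v hv
        rw [interior_Icc] at hv
        have hv1 : -1 < v := by linarith [hv.1]
        rw [(hasDerivAt_g1 v hv1).deriv]
        have hlg := log_le' hv1
        linarith [hv.2]
    have := key (Set.left_mem_Icc.2 h0.le) (Set.right_mem_Icc.2 h0.le) h0.le
    simp only [phiW] at this ⊢
    simp at this
    nlinarith [this]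

-- φ(u) ≤ u² for -1/2 ≤ u
lemma phi_upper {u : ℝ} (h1 : -(1/2:ℝ) ≤ u) : phiW u ≤ u^2 := by
  rcases le_or_gt 0 u with h0 | h0
  · have key : MonotoneOn (fun v => v^2 - phiW v) (Set.Icc 0 u) := by
      apply monotoneOn_of_deriv_nonneg (convex_Icc 0 u)
      · intro v hv
        exact (hasDerivAt_g2 v (by simp at hv; linarith [hv.1])).continuousAt.continuousWithinAt
      · intro v hv
        rw [interior_Icc] at hv
        exact (hasDerivAt_g2 v (by linarith [hv.1])).differentiableAt.differentiableWithinAt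
      · intro v hv
        rw [interior_Icc] at hv
        have hv1 : -1 < v := by linarith [hv.1]
        rw [(hasDerivAt_g2 v hv1).deriv]
        have := log_le' hv1
        linarith [hv.1]
    have := key (Set.left_mem_Icc.2 h0) (Set.right_mem_Icc.2 h0) h0
    simp only [phiW] at this ⊢
    simp at this
    nlinarith [this]
  · have key : AntitoneOn (fun v => v^2 - phiW v) (Set.Icc u 0) := by
      apply antitoneOn_of_deriv_nonpos (convex_Icc u 0)
      · intro v hv
        exact (hasDerivAt_g2 v (by simp at hv; linarith [hv.1, h1])).continuousAt.continuousWithinAt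
      · intro v hv
        rw [interior_Icc] at hv
        exact (hasDerivAt_g2 v (by linarith [hv.1, h1])).differentiableAt.differentiableWithinAt
      · intro v hv
        rw [interior_Icc] at hv
        have hv1 : -1 < v := by linarith [hv.1, h1]
        rw [(hasDerivAt_g2 v hv1).deriv]
        have hlg := log_ge_frac hv1
        have hv2 : 2*v ≤ v/(1+v) := by
          rw [le_div_iff₀ (show (0:ℝ) < 1+v by linarith)]
          nlinarith [hv.1, hv.2, h1]
        linarith
    have := key (Set.left_mem_Icc.2 h0.le) (Set.right_mem_Icc.2 h0.le) h0.le
    simp only [phiW] at this ⊢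
    simp at this
    nlinarith [this]

-- 1/4 ≤ φ(u) for 1 ≤ u
lemma phi_ge_one {u : ℝ} (h1 : (1:ℝ) ≤ u) : (1/4:ℝ) ≤ phiW u := by
  have h2 : (0:ℝ) < 1 + u := by linarith
  have hl2 : (0.6931471803 : ℝ) < Real.log 2 := Real.log_two_gt_d9
  have hsplit : Real.log (1+u) = Real.log 2 + Real.log ((1+u)/2) := by
    rw [← Real.log_mul (by norm_num) (by positivity)]
    ring_nf
  have hfr : 1 - 2/(1+u) ≤ Real.log ((1+u)/2) := by
    have := log_ge_one_sub_inv (show (0:ℝ) < (1+u)/2 by positivity)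
    have h3 : 1/((1+u)/2) = 2/(1+u) := by field_simp
    linarith [h3 ▸ this]
  have hmain : (1+u)*Real.log (1+u) ≥ (1+u)*(Real.log 2 + 1) - 2 := by
    rw [hsplit]
    have := mul_le_mul_of_nonneg_left hfr (show (0:ℝ) ≤ 1+u by linarith)
    have h4 : (1+u) * (1 - 2/(1+u)) = (1+u) - 2 := by field_simp
    nlinarith [h4 ▸ this]
  simp only [phiW]
  nlinarith [hl2, h1]



lemma sqrt_exp' (t : ℝ) : Real.sqrt (Real.exp t) = Real.exp (t/2) := by
  rw [show Real.exp t = (Real.exp (t/2))^2 by rw [← Real.exp_nat_mul]; congr 1; push_cast; ring,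
    Real.sqrt_sq (Real.exp_nonneg _)]

lemma key_identity_s17 (x : ℝ) (hx : 0 < x) (i : ℕ) (hi : 1 ≤ i) :
    Real.exp (-(x^2) / 2) * x ^ i / Real.sqrt (((i:ℝ)/Real.exp 1)^i)
      = Real.exp (-(x^2/2) * phiW ((i:ℝ)/x^2 - 1)) := by
  have hi' : (0:ℝ) < i := by exact_mod_cast hi
  have hB : ((i:ℝ)/Real.exp 1)^i = Real.exp ((i:ℝ)*(Real.log i - 1)) := by
    rw [show (i:ℝ)/Real.exp 1 = Real.exp (Real.log i - 1) by
      rw [Real.exp_sub, Real.exp_log hi']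
    , ← Real.exp_nat_mul]
  have hx2 : x^2 ≠ 0 := by positivity
  rw [hB, sqrt_exp', show (x:ℝ)^i = Real.exp ((i:ℝ) * Real.log x) by
      rw [← Real.exp_log hx, ← Real.exp_nat_mul, Real.exp_log hx]
    , ← Real.exp_add, ← Real.exp_sub]
  congr 1
  have h1 : 1 + ((i:ℝ)/x^2 - 1) = (i:ℝ)/x^2 := by ring
  have h2 : Real.log ((i:ℝ)/x^2) = Real.log i - 2 * Real.log x := by
    rw [Real.log_div hi'.ne' hx2, Real.log_pow]; push_cast; ring
  simp only [phiW, h1, h2]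
  field_simp
  ring



lemma term_bounds (x : ℝ) (hx : 0 < x) (i : ℕ) (hi : 1 ≤ i) :
    Real.exp (-(x^2/2) * phiW ((i:ℝ)/x^2 - 1)) / (Real.sqrt 2 * Real.sqrt (Real.sqrt (2*i)))
        ≤ Real.exp (-(x^2)/2) * x^i / Real.sqrt (Nat.factorial i) ∧
    Real.exp (-(x^2)/2) * x^i / Real.sqrt (Nat.factorial i)
        ≤ Real.exp (-(x^2/2) * phiW ((i:ℝ)/x^2 - 1)) / Real.sqrt (Real.sqrt (2*i)) := by
  have hi' : (0:ℝ) < i := by exact_mod_cast hi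
  set B : ℝ := ((i:ℝ)/Real.exp 1)^i with hBdef
  have hBpos : 0 < B := by positivity
  have hsB : 0 < Real.sqrt B := Real.sqrt_pos.2 hBpos
  have hP : 0 < Real.sqrt (Real.sqrt (2*i)) := by positivity
  have hN : 0 < Real.exp (-(x^2)/2) * x^i := by positivity
  obtain ⟨hf1, hf2⟩ := factorial_bounds i hi
  have hfacpos : (0:ℝ) < (Nat.factorial i : ℝ) := by exact_mod_cast (Nat.factorial_pos i)
  have hsf : 0 < Real.sqrt (Nat.factorial i) := Real.sqrt_pos.2 hfacpos
  have hs1 : Real.sqrt (Real.sqrt (2*i)) * Real.sqrt B ≤ Real.sqrt (Nat.factorial i) := by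
    rw [← Real.sqrt_mul (by positivity)]
    exact Real.sqrt_le_sqrt hf1
  have hs2 : Real.sqrt (Nat.factorial i) ≤ Real.sqrt 2 * (Real.sqrt (Real.sqrt (2*i)) * Real.sqrt B) := by
    rw [← Real.sqrt_mul (by norm_num), ← Real.sqrt_mul (by positivity)]
    exact Real.sqrt_le_sqrt (by linarith)
  have hE := key_identity_s17 x hx i hi
  constructor
  · rw [← hE]
    rw [div_le_div_iff₀ (by positivity) hsf]
    calc Real.exp (-(x^2)/2) * x^i / Real.sqrt B * Real.sqrt (Nat.factorial i)
        ≤ Real.exp (-(x^2)/2) * x^i / Real.sqrt B * (Real.sqrt 2 * (Real.sqrt (Real.sqrt (2*i)) * Real.sqrt B)) := by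
          apply mul_le_mul_of_nonneg_left hs2 (by positivity)
      _ = Real.exp (-(x^2)/2) * x^i * (Real.sqrt 2 * Real.sqrt (Real.sqrt (2*i))) := by
          field_simp
  · rw [← hE]
    rw [div_le_div_iff₀ hsf (by positivity)]
    calc Real.exp (-(x^2)/2) * x^i * Real.sqrt (Real.sqrt (2*i))
        = Real.exp (-(x^2)/2) * x^i / Real.sqrt B * (Real.sqrt (Real.sqrt (2*i)) * Real.sqrt B) := by
          field_simp
      _ ≤ Real.exp (-(x^2)/2) * x^i / Real.sqrt B * Real.sqrt (Nat.factorial i) := by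
          apply mul_le_mul_of_nonneg_left hs1 (by positivity)


lemma rpow_neg_half (x : ℝ) (hx : 0 < x) : x ^ (-(1:ℝ)/2) = (Real.sqrt x)⁻¹ := by
  rw [show (-(1:ℝ)/2) = -(1/2:ℝ) by norm_num, Real.rpow_neg hx.le, Real.sqrt_eq_rpow]

lemma twenty_le (x : ℝ) (hx : 100 ≤ x) : (20:ℝ) ≤ x ^ ((2:ℝ)/3) := by
  have h1 : (100:ℝ) ^ ((2:ℝ)/3) ≤ x ^ ((2:ℝ)/3) :=
    Real.rpow_le_rpow (by norm_num) hx (by norm_num)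
  have h2 : (20:ℝ) ≤ (100:ℝ) ^ ((2:ℝ)/3) := by
    set y := (100:ℝ) ^ ((2:ℝ)/3) with hy
    have hy0 : 0 ≤ y := Real.rpow_nonneg (by norm_num) _
    have hy3 : y ^ (3:ℕ) = 10000 := by
      rw [hy, ← Real.rpow_natCast ((100:ℝ)^((2:ℝ)/3)) 3, ← Real.rpow_mul (by norm_num),
        show ((2:ℝ)/3*((3:ℕ):ℝ)) = ((2:ℕ):ℝ) by push_cast; ring, Real.rpow_natCast]
      norm_num
    nlinarith [sq_nonneg (y - 20), sq_nonneg (y + 20), hy0]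
  linarith

lemma rpow23_le (x : ℝ) (hx : 1 ≤ x) : x ^ ((2:ℝ)/3) ≤ x := by
  calc x ^ ((2:ℝ)/3) ≤ x ^ (1:ℝ) := Real.rpow_le_rpow_of_exponent_le hx (by norm_num)
    _ = x := Real.rpow_one x

lemma x13_div (x : ℝ) (hx : 100 ≤ x) : x ^ ((1:ℝ)/3) / x ≤ 1/20 := by
  have hx0 : (0:ℝ) < x := by linarith
  have h20 := twenty_le x hx
  have hsplit : x = x ^ ((1:ℝ)/3) * x ^ ((2:ℝ)/3) := by
    rw [← Real.rpow_add hx0]; norm_num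
  rw [div_le_div_iff₀ hx0 (by norm_num)]
  have h13 : 0 ≤ x ^ ((1:ℝ)/3) := Real.rpow_nonneg hx0.le _
  nlinarith [mul_le_mul_of_nonneg_left h20 h13]


lemma div_le_div_of_nonneg_right' {a b c : ℝ} (h : a ≤ b) (hc : 0 < c) : a / c ≤ b / c :=
  (div_le_div_iff_of_pos_right hc).2 h

lemma div_le_div_of_nonneg_left' {a b c : ℝ} (ha : 0 ≤ a) (hc : 0 < c) (h : c ≤ b) :
    a / b ≤ a / c :=
  div_le_div_of_nonneg_left ha hc h

set_option maxHeartbeats 2000000 in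
/-- pointwise size estimates for the terms `e^{−x²/2} xⁱ/√(i!)` of the
normalized Weyl polynomial (here `L = |i − x²|/x`). -/
theorem weyl_term_size :
    ∃ c₁ c₂ x₀ : ℝ, 0 < c₁ ∧ 0 < c₂ ∧ 0 < x₀ ∧
    ∀ x : ℝ, x₀ ≤ x →
      (∀ i : ℕ, 0 < i → |(i : ℝ) - x ^ 2| / x ≤ x ^ ((1 : ℝ) / 3) →
        c₁⁻¹ * x ^ (-(1 : ℝ) / 2) * Real.exp (-c₁ * (|(i : ℝ) - x ^ 2| / x) ^ 2) ≤
            Real.exp (-(x ^ 2) / 2) * x ^ i / Real.sqrt (Nat.factorial i) ∧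
          Real.exp (-(x ^ 2) / 2) * x ^ i / Real.sqrt (Nat.factorial i) ≤
            c₂⁻¹ * x ^ (-(1 : ℝ) / 2) * Real.exp (-c₂ * (|(i : ℝ) - x ^ 2| / x) ^ 2)) ∧
      (∀ L : ℝ, 0 < L → ∀ i : ℕ, 0 < i →
        ((i : ℝ) ≤ x ^ 2 - L * x ∨ x ^ 2 + L * x ≤ (i : ℝ)) →
        Real.exp (-(x ^ 2) / 2) * x ^ i / Real.sqrt (Nat.factorial i) ≤
          c₂⁻¹ * x ^ (-(1 : ℝ) / 2) *
            Real.exp (-c₂ * min (L ^ 2) (x ^ ((2 : ℝ) / 3)))) := by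
  refine ⟨2, 1/8, 100, by norm_num, by norm_num, by norm_num, ?_⟩
  intro x hx
  have hx0 : (0:ℝ) < x := by linarith
  have hx1 : (1:ℝ) ≤ x := by linarith
  have hxr : x ^ (-(1:ℝ)/2) = (Real.sqrt x)⁻¹ := rpow_neg_half x hx0
  have hsx : 0 < Real.sqrt x := Real.sqrt_pos.2 hx0
  have hx2 : (0:ℝ) < x^2 := by positivity
  have hs2 : Real.sqrt 2 * Real.sqrt 2 = 2 := Real.mul_self_sqrt (by norm_num)
  constructor
  · -- Part (i)
    intro i hi hL
    set L : ℝ := |(i:ℝ) - x^2| / x with hLdef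
    have hi1 : 1 ≤ i := hi
    have hi' : (0:ℝ) < i := by exact_mod_cast hi
    set u : ℝ := (i:ℝ)/x^2 - 1 with hudef
    have hueq : u = ((i:ℝ) - x^2)/x^2 := by rw [hudef]; field_simp
    have hL0 : 0 ≤ L := by rw [hLdef]; positivity
    have hx2u2 : x^2 * u^2 = L^2 := by
      rw [hueq, hLdef, div_pow, div_pow, sq_abs]
      field_simp
    have habs : |u| = L / x := by
      rw [hueq, hLdef, abs_div, abs_of_pos hx2, div_div]
      congr 1
      ring
    have husmall : |u| ≤ 1/20 := by
      rw [habs]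
      calc L / x ≤ x ^ ((1:ℝ)/3) / x := by gcongr
        _ ≤ 1/20 := x13_div x hx
    obtain ⟨hu1, hu2⟩ := abs_le.1 husmall
    have hieq : (i:ℝ) = x^2*(1+u) := by rw [hueq]; field_simp; ring
    obtain ⟨hT1, hT2⟩ := term_bounds x hx0 i hi1
    rw [← hudef] at hT1 hT2
    set P : ℝ := Real.sqrt (Real.sqrt (2*i)) with hPdef
    have hPpos : 0 < P := by
      rw [hPdef]
      have : (0:ℝ) < 2*i := by positivity
      positivity
    clear_value L u P
    clear hudef hLdef
    have hPlb : Real.sqrt x ≤ P := by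
      have h2i : x^2 ≤ 2*(i:ℝ) := by nlinarith
      have hstep : x ≤ Real.sqrt (2*(i:ℝ)) := by
        have := Real.sqrt_le_sqrt h2i
        rwa [Real.sqrt_sq hx0.le] at this
      rw [hPdef]
      exact Real.sqrt_le_sqrt hstep
    have hPub : P ≤ Real.sqrt 2 * Real.sqrt x := by
      have h2i4 : 2*(i:ℝ) ≤ (2*x)^2 := by nlinarith
      have hstep : Real.sqrt (2*(i:ℝ)) ≤ 2*x := by
        have := Real.sqrt_le_sqrt h2i4
        rwa [Real.sqrt_sq (by linarith : (0:ℝ) ≤ 2*x)] at this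
      rw [hPdef]
      calc Real.sqrt (Real.sqrt (2*(i:ℝ))) ≤ Real.sqrt (2*x) := Real.sqrt_le_sqrt hstep
        _ = Real.sqrt 2 * Real.sqrt x := Real.sqrt_mul (by norm_num) x
    have hphiu : phiW u ≤ u^2 := phi_upper (by linarith)
    have hphil : u^2/4 ≤ phiW u := phi_lower (by linarith) (by linarith)
    rw [hxr]
    constructor
    · have h2P : Real.sqrt 2 * P ≤ 2 * Real.sqrt x := by
        nlinarith [Real.sqrt_nonneg 2]
      have he1 : Real.exp (-2 * L^2) ≤ Real.exp (-(x^2/2) * phiW u) := by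
        apply Real.exp_le_exp.2
        have hmul : x^2 * phiW u ≤ x^2 * u^2 := mul_le_mul_of_nonneg_left hphiu hx2.le
        linarith [sq_nonneg L]
      calc (2:ℝ)⁻¹ * (Real.sqrt x)⁻¹ * Real.exp (-2 * L^2)
          = Real.exp (-2 * L^2) / (2 * Real.sqrt x) := by
            rw [div_eq_mul_inv, mul_inv]; ring
        _ ≤ Real.exp (-(x^2/2) * phiW u) / (2 * Real.sqrt x) :=
            div_le_div_of_nonneg_right' he1 (by positivity)
        _ ≤ Real.exp (-(x^2/2) * phiW u) / (Real.sqrt 2 * P) :=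
            div_le_div_of_nonneg_left' (Real.exp_nonneg _) (by positivity) h2P
        _ ≤ Real.exp (-(x^2)/2) * x^i / Real.sqrt (Nat.factorial i) := hT1
    · have he2 : Real.exp (-(x^2/2) * phiW u) ≤ Real.exp (-(1/8) * L^2) := by
        apply Real.exp_le_exp.2
        have hmul : x^2 * (u^2/4) ≤ x^2 * phiW u := mul_le_mul_of_nonneg_left hphil hx2.le
        linarith
      calc Real.exp (-(x^2)/2) * x^i / Real.sqrt (Nat.factorial i)
          ≤ Real.exp (-(x^2/2) * phiW u) / P := hT2
        _ ≤ Real.exp (-(x^2/2) * phiW u) / Real.sqrt x :=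
            div_le_div_of_nonneg_left' (Real.exp_nonneg _) hsx hPlb
        _ ≤ Real.exp (-(1/8) * L^2) / Real.sqrt x :=
            div_le_div_of_nonneg_right' he2 hsx
        _ ≤ (1/8:ℝ)⁻¹ * (Real.sqrt x)⁻¹ * Real.exp (-(1/8) * L^2) := by
            rw [div_eq_mul_inv, show ((1/8:ℝ))⁻¹ = 8 by norm_num]
            have h1 := Real.exp_pos (-(1/8) * L^2)
            have h2 := inv_pos.2 hsx
            nlinarith
  · -- Part (ii)
    intro L hLpos i hi hcase
    have hi1 : 1 ≤ i := hi
    have hi' : (0:ℝ) < i := by exact_mod_cast hi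
    have hicast : (1:ℝ) ≤ i := by exact_mod_cast hi1
    set u : ℝ := (i:ℝ)/x^2 - 1 with hudef
    have hueq : u = ((i:ℝ) - x^2)/x^2 := by rw [hudef]; field_simp
    have hu_neg1 : -1 < u := by
      rw [hueq, lt_div_iff₀ hx2]; nlinarith
    have hieq : (i:ℝ) = x^2*(1+u) := by rw [hueq]; field_simp; ring
    have hL2 : L^2 ≤ x^2 * u^2 := by
      have h1 : L*x ≤ |(i:ℝ) - x^2| := by
        rcases hcase with h | h
        · rw [abs_of_nonpos (by nlinarith : (i:ℝ) - x^2 ≤ 0)]; linarith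
        · rw [abs_of_nonneg (by nlinarith : (0:ℝ) ≤ (i:ℝ) - x^2)]; linarith
      have h3 : (L*x)^2 ≤ ((i:ℝ)-x^2)^2 := by
        have := pow_le_pow_left₀ (by positivity : (0:ℝ) ≤ L*x) h1 2
        rwa [sq_abs] at this
      have h2 : x^2*u^2 = ((i:ℝ)-x^2)^2/x^2 := by rw [hueq]; field_simp
      rw [h2, le_div_iff₀ hx2]; nlinarith
    obtain ⟨hT1, hT2⟩ := term_bounds x hx0 i hi1
    rw [← hudef] at hT2
    clear hT1
    set P : ℝ := Real.sqrt (Real.sqrt (2*i)) with hPdef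
    have hPpos : 0 < P := by
      rw [hPdef]
      have : (0:ℝ) < 2*i := by positivity
      positivity
    rw [hxr]
    set m : ℝ := min (L^2) (x ^ ((2:ℝ)/3)) with hmdef
    have hm1 : m ≤ L^2 := min_le_left _ _
    have hm2 : m ≤ x ^ ((2:ℝ)/3) := min_le_right _ _
    have hm0 : 0 ≤ m := le_min (sq_nonneg L) (Real.rpow_nonneg hx0.le _)
    clear_value u P m
    clear hudef hmdef
    rcases le_or_gt (-(1/2):ℝ) u with hu | hu
    · -- Case A : u ≥ -1/2
      have hPlb : Real.sqrt x ≤ P := by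
        have h2i : x^2 ≤ 2*(i:ℝ) := by nlinarith
        have hstep : x ≤ Real.sqrt (2*(i:ℝ)) := by
          have := Real.sqrt_le_sqrt h2i
          rwa [Real.sqrt_sq hx0.le] at this
        rw [hPdef]
        exact Real.sqrt_le_sqrt hstep
      have hphi : m/8 ≤ x^2/2 * phiW u := by
        rcases le_or_gt u 1 with hu1 | hu1
        · have hp := phi_lower hu_neg1 hu1
          have hmul : x^2 * (u^2/4) ≤ x^2 * phiW u := mul_le_mul_of_nonneg_left hp hx2.le
          linarith
        · have hp := phi_ge_one hu1.le
          have hmul : x^2 * (1/4) ≤ x^2 * phiW u := mul_le_mul_of_nonneg_left hp hx2.le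
          have hxx : x ^ ((2:ℝ)/3) ≤ x^2 := by nlinarith [rpow23_le x hx1]
          linarith
      have he : Real.exp (-(x^2/2) * phiW u) ≤ Real.exp (-(1/8) * m) := by
        apply Real.exp_le_exp.2
        linarith
      calc Real.exp (-(x^2)/2) * x^i / Real.sqrt (Nat.factorial i)
          ≤ Real.exp (-(x^2/2) * phiW u) / P := hT2
        _ ≤ Real.exp (-(x^2/2) * phiW u) / Real.sqrt x :=
            div_le_div_of_nonneg_left' (Real.exp_nonneg _) hsx hPlb
        _ ≤ Real.exp (-(1/8) * m) / Real.sqrt x :=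
            div_le_div_of_nonneg_right' he hsx
        _ ≤ (1/8:ℝ)⁻¹ * (Real.sqrt x)⁻¹ * Real.exp (-(1/8) * m) := by
            rw [div_eq_mul_inv, show ((1/8:ℝ))⁻¹ = 8 by norm_num]
            have h1 := Real.exp_pos (-(1/8) * m)
            have h2 := inv_pos.2 hsx
            nlinarith
    · -- Case B : u < -1/2
      have hphi : (1:ℝ)/16 ≤ phiW u := by
        have hp := phi_lower hu_neg1 (by linarith)
        nlinarith
      have hE : Real.exp (-(x^2/2) * phiW u) ≤ Real.exp (-(x^2)/32) := by
        apply Real.exp_le_exp.2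
        have hmul : x^2 * (1/16) ≤ x^2 * phiW u := mul_le_mul_of_nonneg_left hphi hx2.le
        linarith
      have hP1 : (1:ℝ) ≤ P := by
        have hs1 : (1:ℝ) ≤ Real.sqrt (2*(i:ℝ)) := by
          rw [show (1:ℝ) = Real.sqrt 1 by simp]
          exact Real.sqrt_le_sqrt (by linarith)
        rw [hPdef, show (1:ℝ) = Real.sqrt 1 by simp]
        exact Real.sqrt_le_sqrt (by simpa using hs1)
      have hsxe : Real.sqrt x = Real.exp (Real.log x / 2) := by
        rw [← sqrt_exp', Real.exp_log hx0]
      have hlx : Real.log x ≤ x := by linarith [Real.log_le_sub_one_of_pos hx0]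
      have h23 : x ^ ((2:ℝ)/3) ≤ x := rpow23_le x hx1
      calc Real.exp (-(x^2)/2) * x^i / Real.sqrt (Nat.factorial i)
          ≤ Real.exp (-(x^2/2) * phiW u) / P := hT2
        _ ≤ Real.exp (-(x^2/2) * phiW u) := by
            rw [div_le_iff₀ hPpos]
            nlinarith [Real.exp_pos (-(x^2/2) * phiW u)]
        _ ≤ Real.exp (-(x^2)/32) := hE
        _ ≤ (Real.sqrt x)⁻¹ * Real.exp (-(1/8) * (x ^ ((2:ℝ)/3))) := by
            rw [hsxe, ← Real.exp_neg, ← Real.exp_add]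
            apply Real.exp_le_exp.2
            nlinarith
        _ ≤ (1/8:ℝ)⁻¹ * (Real.sqrt x)⁻¹ * Real.exp (-(1/8) * m) := by
            have hee : Real.exp (-(1/8) * (x ^ ((2:ℝ)/3))) ≤ Real.exp (-(1/8) * m) :=
              Real.exp_le_exp.2 (by linarith)
            have h2 := inv_pos.2 hsx
            calc (Real.sqrt x)⁻¹ * Real.exp (-(1/8) * (x ^ ((2:ℝ)/3)))
                ≤ (Real.sqrt x)⁻¹ * Real.exp (-(1/8) * m) :=
                  mul_le_mul_of_nonneg_left hee h2.le
              _ ≤ (1/8:ℝ)⁻¹ * ((Real.sqrt x)⁻¹ * Real.exp (-(1/8) * m)) := by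
                  rw [show ((1/8:ℝ))⁻¹ = 8 by norm_num]
                  nlinarith [Real.exp_pos (-(1/8) * m)]
              _ = (1/8:ℝ)⁻¹ * (Real.sqrt x)⁻¹ * Real.exp (-(1/8) * m) := by ring
end

section
/- For every constant A > 0 there exist constants C > 0 and x₀ > 0 such that for all real x ≥ x₀ the following holds. Let d be a nonnegative integer with d ≤ (log x)^A, and let i be a positive integer with i = x² + Lx where |L| ≤ x/2. Then the d-th derivative (in x) of the function x ↦ e^{−x²/2}·x^i/√(i!) satisfies |(e^{−x²/2}·x^i/√(i!))^{(d)}| ≤ C·d!·(1+|L|)^d · e^{−x²/2}·x^i/√(i!). -/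
set_option maxHeartbeats 1000000

open Complex

lemma cauchy_iteratedDeriv_bound {F : ℂ → ℂ} (hF : Differentiable ℂ F) (c : ℂ)
    {R : NNReal} (hR : 0 < R) {M : ℝ}
    (hM : ∀ z : ℂ, dist z c = R → ‖F z‖ ≤ M) (n : ℕ) :
    ‖iteratedDeriv n F c‖ ≤ n.factorial * M / (R : ℝ) ^ n := by
  have h := hF.hasFPowerSeriesOnBall c hR
  have key := h.factorial_smul (y := (1 : ℂ)) n
  have h1 : ‖iteratedDeriv n F c‖
      = n.factorial * ‖cauchyPowerSeries F c R n fun _ => (1:ℂ)‖ := by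
    rw [iteratedDeriv_eq_iteratedFDeriv, ← key, ← Nat.cast_smul_eq_nsmul ℝ, norm_smul]
    simp
  rw [h1]
  have h2 : ‖cauchyPowerSeries F c R n fun _ => (1:ℂ)‖ ≤ ‖cauchyPowerSeries F c R n‖ := by
    have := (cauchyPowerSeries F c R n).le_opNorm (fun _ => (1:ℂ))
    simpa using this
  have hMnn : 0 ≤ M := by
    obtain ⟨z, hz⟩ : ∃ z : ℂ, dist z c = R := ⟨c + R, by simp [dist_eq_norm]⟩
    exact le_trans (norm_nonneg _) (hM z hz)
  have h3 : ‖cauchyPowerSeries F c R n‖ ≤ M * |(R:ℝ)|⁻¹ ^ n := by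
    refine (norm_cauchyPowerSeries_le F c R n).trans ?_
    gcongr
    have hint : (∫ θ : ℝ in (0)..2 * Real.pi, ‖F (circleMap c R θ)‖) ≤
        ∫ _ : ℝ in (0)..2 * Real.pi, M := by
      apply intervalIntegral.integral_mono_on Real.two_pi_pos.le
      · exact (hF.continuous.comp (continuous_circleMap c R)).norm.intervalIntegrable _ _
      · exact intervalIntegrable_const
      · intro θ _
        have := circleMap_mem_sphere c R.coe_nonneg θ
        rw [Metric.mem_sphere] at this
        exact hM _ this
    rw [intervalIntegral.integral_const, smul_eq_mul, sub_zero] at hint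
    calc (2 * Real.pi)⁻¹ * ∫ θ : ℝ in (0)..2 * Real.pi, ‖F (circleMap c R θ)‖
        ≤ (2 * Real.pi)⁻¹ * (2 * Real.pi * M) := by
          have h2pi : (0:ℝ) ≤ (2 * Real.pi)⁻¹ := inv_nonneg.mpr Real.two_pi_pos.le
          nlinarith [hint]
      _ = M := by field_simp
  calc (n.factorial : ℝ) * ‖cauchyPowerSeries F c R n fun _ => (1:ℂ)‖
      ≤ n.factorial * (M * |(R:ℝ)|⁻¹ ^ n) := by
        gcongr
        exact h2.trans h3
    _ = n.factorial * M / (R : ℝ) ^ n := by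
        rw [_root_.abs_of_nonneg R.coe_nonneg]
        field_simp
        rw [one_div, inv_pow, mul_assoc, inv_mul_cancel₀ (pow_ne_zero _ (NNReal.coe_ne_zero.mpr hR.ne')), mul_one]

lemma iteratedDeriv_re_ofReal {F : ℂ → ℂ} (hF : Differentiable ℂ F) (d : ℕ) (x : ℝ) :
    iteratedDeriv d (fun y : ℝ => (F y).re) x = (iteratedDeriv d F x).re := by
  induction d generalizing F with
  | zero => simp
  | succ n ih =>
    have hd : Differentiable ℂ (deriv F) := by
      have h1 : AnalyticOnNhd ℂ F Set.univ :=
        (hF.differentiableOn).analyticOnNhd isOpen_univ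
      exact fun z => ((h1.deriv) z (Set.mem_univ z)).differentiableAt
    rw [iteratedDeriv_succ', iteratedDeriv_succ']
    have heq : deriv (fun t : ℝ => (F t).re) = fun y : ℝ => ((deriv F) y).re := by
      funext y
      exact ((hF _).hasDerivAt.real_of_complex).deriv
    rw [heq]
    exact ih hd

lemma weyl_sphere_bound (i : ℕ) (x L R : ℝ) (hx : 2 ≤ x) (hi : (i:ℝ) = x^2 + L*x)
    (hL : |L| ≤ x/2) (hR : R = 1/(1+|L|)) (z : ℂ) (hz : dist z (x:ℂ) = R) :
    Real.exp (-((z.re)^2 - (z.im)^2)/2) * ‖z‖^i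
      ≤ Real.exp 3 * (Real.exp (-(x^2)/2) * x^i) := by
  have hx0 : (0:ℝ) < x := by linarith
  have hBpos : (0:ℝ) < 1 + |L| := by positivity
  have hR1 : R ≤ 1 := by rw [hR, div_le_one hBpos]; linarith [abs_nonneg L]
  have hR0 : 0 < R := by rw [hR]; positivity
  obtain ⟨a, ha_def⟩ : ∃ a, a = (z - (x:ℂ)).re := ⟨_, rfl⟩
  obtain ⟨b, hb_def⟩ : ∃ b, b = (z - (x:ℂ)).im := ⟨_, rfl⟩
  have hzre : z.re = x + a := by simp [ha_def]
  have hzim : z.im = b := by simp [hb_def]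
  have hab : a^2 + b^2 = R^2 := by
    have h0 : ‖z - (x:ℂ)‖ = R := by rwa [dist_eq] at hz
    have h1 := Complex.sq_norm (z - (x:ℂ))
    rw [h0, Complex.normSq_apply] at h1
    rw [h1, ← ha_def, ← hb_def]; ring
  have habsz : ‖z‖^2 = (x+a)^2 + b^2 := by
    rw [Complex.sq_norm, Complex.normSq_apply, hzre, hzim]; ring
  have hzpos : (0:ℝ) < ‖z‖ := by
    have h2 := norm_sub_norm_le (x:ℂ) ((x:ℂ) - z)
    rw [sub_sub_cancel, norm_sub_rev] at h2
    have h3 : ‖z - (x:ℂ)‖ = R := by rwa [dist_eq_norm] at hz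
    have h4 : ‖(x:ℂ)‖ = x := by
      rw [Complex.norm_of_nonneg hx0.le]
    rw [h3, h4] at h2
    linarith
  have hexp1 : ‖z‖^i = Real.exp (i * Real.log ‖z‖) := by
    rw [Real.exp_nat_mul, Real.exp_log hzpos]
  have hexp2 : x^i = Real.exp (i * Real.log x) := by
    rw [Real.exp_nat_mul, Real.exp_log hx0]
  rw [hexp1, hexp2, ← Real.exp_add, ← Real.exp_add, ← Real.exp_add, Real.exp_le_exp]
  have hlog : (i:ℝ) * Real.log ‖z‖ - i * Real.log x
      ≤ (i/2) * (((x+a)^2 + b^2 - x^2)/x^2) := by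
    have h5 : Real.log ‖z‖ - Real.log x
        = (1/2) * Real.log (((x+a)^2 + b^2) / x^2) := by
      rw [Real.log_div (by rw [← habsz]; positivity) (by positivity), ← habsz,
        Real.log_pow, Real.log_pow]
      push_cast; ring
    have h6 : Real.log (((x+a)^2 + b^2) / x^2) ≤ ((x+a)^2 + b^2) / x^2 - 1 :=
      Real.log_le_sub_one_of_pos (by rw [← habsz]; positivity)
    have h7 : ((x+a)^2 + b^2) / x^2 - 1 = ((x+a)^2 + b^2 - x^2)/x^2 := by
      field_simp
    have h8 : (0:ℝ) ≤ (i:ℝ) := Nat.cast_nonneg i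
    calc (i:ℝ) * Real.log ‖z‖ - i * Real.log x
        = (i:ℝ) * (Real.log ‖z‖ - Real.log x) := by ring
      _ = (i:ℝ) * ((1/2) * Real.log (((x+a)^2 + b^2) / x^2)) := by rw [h5]
      _ ≤ (i:ℝ) * ((1/2) * (((x+a)^2 + b^2 - x^2)/x^2)) := by
          rw [← h7]
          exact mul_le_mul_of_nonneg_left (by linarith) h8
      _ = (i/2) * (((x+a)^2 + b^2 - x^2)/x^2) := by ring
  have main : -((x+a)^2 - b^2)/2 + x^2/2
      + ((x^2+L*x)/2)*(((x+a)^2 + b^2 - x^2)/x^2) ≤ 3 := by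
    have hLR : |L| * R ≤ 1 := by
      rw [hR, mul_one_div, div_le_one hBpos]; linarith
    have ha : |a| ≤ R := by nlinarith [sq_nonneg b, abs_nonneg a, _root_.sq_abs a]
    have hb2 : b^2 ≤ R^2 := by nlinarith [sq_nonneg a]
    have key : ((x^2+L*x)/2)*(((x+a)^2 + b^2 - x^2)/x^2)
        = (1+L/x)*(x*a + (a^2+b^2)/2) := by field_simp; ring
    rw [key]
    have expand : -((x+a)^2 - b^2)/2 + x^2/2 + (1+L/x)*(x*a + (a^2+b^2)/2)
        = (b^2 - a^2)/2 + (a^2+b^2)/2 + L*a + L/x*((a^2+b^2)/2) := by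
      field_simp; ring
    rw [expand, hab]
    have hLa : L * a ≤ 1 := by
      calc L * a ≤ |L * a| := le_abs_self _
        _ = |L| * |a| := abs_mul _ _
        _ ≤ |L| * R := by gcongr
        _ ≤ 1 := hLR
    have hLx : L / x * (R^2/2) ≤ 1/4 := by
      have h1 : L / x * (R^2/2) ≤ |L| / x * (R^2/2) :=
        mul_le_mul_of_nonneg_right ((div_le_div_iff_of_pos_right hx0).mpr (le_abs_self L))
          (by positivity)
      have h2 : |L| / x ≤ 1/2 := by
        rw [div_le_iff₀ hx0]; linarith
      nlinarith [sq_nonneg R]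
    have hR2 : R^2 ≤ 1 := by nlinarith
    linarith [sq_nonneg a, hLa, hLx, hb2]
  rw [← hi] at main
  rw [hzre, hzim]
  linarith [hlog, main]

/-- bound on high derivatives of the terms of the normalized Weyl
polynomial (here `L = (i − x²)/x`). -/
theorem weyl_term_derivative_bound (A : ℝ) (hA : 0 < A) :
    ∃ C x₀ : ℝ, 0 < C ∧ 0 < x₀ ∧
    ∀ x : ℝ, x₀ ≤ x →
    ∀ d : ℕ, (d : ℝ) ≤ Real.log x ^ A →
    ∀ i : ℕ, 0 < i → |((i : ℝ) - x ^ 2) / x| ≤ x / 2 →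
      |iteratedDeriv d
          (fun y => Real.exp (-(y ^ 2) / 2) * y ^ i / Real.sqrt (Nat.factorial i)) x| ≤
        C * (Nat.factorial d) * (1 + |((i : ℝ) - x ^ 2) / x|) ^ d *
          (Real.exp (-(x ^ 2) / 2) * x ^ i / Real.sqrt (Nat.factorial i)) := by
  refine ⟨Real.exp 3, 2, Real.exp_pos 3, by norm_num, ?_⟩
  intro x hx d _hd i _hi0 hL
  have hx0 : (0:ℝ) < x := by linarith
  have hs : (0:ℝ) < Real.sqrt (Nat.factorial i) := by
    apply Real.sqrt_pos.mpr
    exact_mod_cast Nat.pos_of_ne_zero (Nat.factorial_ne_zero i)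
  set s : ℝ := Real.sqrt (Nat.factorial i) with hs_def
  set L : ℝ := ((i : ℝ) - x ^ 2) / x with hL_def
  have hiL : (i:ℝ) = x^2 + L*x := by rw [hL_def]; field_simp; ring
  have hBpos : (0:ℝ) < 1 + |L| := by positivity
  set F : ℂ → ℂ := fun z => Complex.exp (-(z^2)/2) * z^i / (s:ℂ) with hF_def
  have hF : Differentiable ℂ F := by
    apply Differentiable.div_const
    exact (Complex.differentiable_exp.comp (((differentiable_pow 2).neg).div_const 2)).mul
      (differentiable_pow i)
  have hfun : (fun y : ℝ => Real.exp (-(y ^ 2) / 2) * y ^ i / s)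
      = fun y : ℝ => (F (y:ℂ)).re := by
    funext y
    rw [hF_def]
    simp only
    rw [show -((y:ℂ)^2)/2 = (((-(y^2)/2 : ℝ)):ℂ) by push_cast; ring, ← Complex.ofReal_exp,
      ← Complex.ofReal_pow, ← Complex.ofReal_mul, ← Complex.ofReal_div, Complex.ofReal_re]
  set R : NNReal := Real.toNNReal (1/(1+|L|)) with hR_def
  have hRcoe : (R:ℝ) = 1/(1+|L|) := Real.coe_toNNReal _ (by positivity)
  have hRpos : 0 < R := by
    rw [← NNReal.coe_pos, hRcoe]; positivity
  set M : ℝ := Real.exp 3 * (Real.exp (-(x^2)/2) * x^i / s) with hM_def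
  have hM : ∀ z : ℂ, dist z (x:ℂ) = (R:ℝ) → ‖F z‖ ≤ M := by
    intro z hz
    have hnorm : ‖F z‖ = Real.exp (-((z.re)^2 - (z.im)^2)/2) * ‖z‖^i / s := by
      rw [hF_def]
      simp only
      rw [norm_div, norm_mul, norm_pow,
        Complex.norm_exp, Complex.norm_of_nonneg hs.le]
      congr 2
      simp [Complex.div_re, Complex.normSq, pow_two, Complex.mul_re]
    rw [hnorm, hM_def]
    have hb := weyl_sphere_bound i x L (R:ℝ) hx hiL hL (by rw [hRcoe]) z hz
    rw [show Real.exp 3 * (Real.exp (-(x^2)/2) * x^i / s)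
        = (Real.exp 3 * (Real.exp (-(x^2)/2) * x^i)) / s by ring]
    gcongr
  have cauchy := cauchy_iteratedDeriv_bound hF (x:ℂ) hRpos hM d
  have hre : |iteratedDeriv d
      (fun y : ℝ => Real.exp (-(y ^ 2) / 2) * y ^ i / s) x|
      ≤ ‖iteratedDeriv d F (x:ℂ)‖ := by
    rw [hfun, iteratedDeriv_re_ofReal hF d x]
    exact Complex.abs_re_le_norm _
  calc |iteratedDeriv d (fun y : ℝ => Real.exp (-(y ^ 2) / 2) * y ^ i / s) x|
      ≤ ‖iteratedDeriv d F (x:ℂ)‖ := hre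
    _ ≤ d.factorial * M / (R:ℝ)^d := cauchy
    _ = Real.exp 3 * d.factorial * (1 + |L|)^d * (Real.exp (-(x^2)/2) * x^i / s) := by
        rw [hRcoe, hM_def]
        rw [div_pow, one_pow, div_div_eq_mul_div, div_one]
        ring
end

section
/- Let x be a nonzero real number and let i, d be natural numbers. Define g : ℝ → ℝ near 0 by g(w) = (1 + w/x)^i · exp(−xw − w²/2). Then the d-th derivative of g at w = 0 equals Σ_{k=0}^d (−1)^k · binom(d,k) · He_k(x) · (i)_{d−k} · x^{−(d−k)}, where He_k is the k-th probabilists' Hermite polynomial and (i)_m = i·(i−1)⋯(i−m+1) denotes the falling factorial (equal to 0 when m > i). -/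
open Polynomial Finset

-- Leibniz rule for iterated derivatives
lemma my_leibniz (f g : ℝ → ℝ) (hf : ContDiff ℝ ⊤ f) (hg : ContDiff ℝ ⊤ g) (n : ℕ) :
    iteratedDeriv n (fun w => f w * g w) =
      fun y => ∑ k ∈ Finset.range (n + 1),
        (n.choose k : ℝ) * iteratedDeriv (n - k) f y * iteratedDeriv k g y := by
  have hdf : ∀ m : ℕ, Differentiable ℝ (iteratedDeriv m f) :=
    fun m => hf.differentiable_iteratedDeriv m (by exact_mod_cast lt_top_iff_ne_top.2 (by simp))
  have hdg : ∀ m : ℕ, Differentiable ℝ (iteratedDeriv m g) :=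
    fun m => hg.differentiable_iteratedDeriv m (by exact_mod_cast lt_top_iff_ne_top.2 (by simp))
  induction n with
  | zero => funext y; simp
  | succ n IH =>
    funext y
    rw [iteratedDeriv_succ, IH]
    have hdiff : ∀ k ∈ Finset.range (n + 1), DifferentiableAt ℝ
        (fun y => (n.choose k : ℝ) * iteratedDeriv (n - k) f y * iteratedDeriv k g y) y := by
      intro k _
      exact ((((hdf (n - k)).const_mul _).mul (hdg k)) y)
    rw [deriv_fun_sum hdiff]
    have hterm : ∀ k ∈ Finset.range (n + 1),
        deriv (fun y => (n.choose k : ℝ) * iteratedDeriv (n - k) f y * iteratedDeriv k g y) y =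
        (n.choose k : ℝ) * iteratedDeriv (n - k + 1) f y * iteratedDeriv k g y
          + (n.choose k : ℝ) * iteratedDeriv (n - k) f y * iteratedDeriv (k + 1) g y := by
      intro k _
      rw [deriv_fun_mul (((hdf (n - k)).const_mul _) y) ((hdg k) y),
        deriv_const_mul _ ((hdf (n - k)) y), ← iteratedDeriv_succ, ← iteratedDeriv_succ]
    rw [Finset.sum_congr rfl hterm, Finset.sum_add_distrib]
    -- now the Pascal reindexing
    set F : ℕ → ℝ := fun m => iteratedDeriv m f y with hF
    set G : ℕ → ℝ := fun m => iteratedDeriv m g y with hG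
    show (∑ k ∈ range (n + 1), (n.choose k : ℝ) * F (n - k + 1) * G k)
        + (∑ k ∈ range (n + 1), (n.choose k : ℝ) * F (n - k) * G (k + 1))
        = ∑ k ∈ range (n + 2), ((n + 1).choose k : ℝ) * F (n + 1 - k) * G k
    rw [Finset.sum_range_succ' (fun k => ((n + 1).choose k : ℝ) * F (n + 1 - k) * G k) (n + 1)]
    have h1 : ∀ k ∈ range (n + 1), ((n + 1).choose (k + 1) : ℝ) * F (n + 1 - (k + 1)) * G (k + 1)
        = (n.choose k : ℝ) * F (n - k) * G (k + 1)
          + (n.choose (k + 1) : ℝ) * F (n - k) * G (k + 1) := by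
      intro k hk
      rw [Nat.choose_succ_succ, Nat.succ_sub_succ]
      push_cast
      ring
    rw [Finset.sum_congr rfl h1, Finset.sum_add_distrib]
    have h2 : (∑ k ∈ range (n + 1), (n.choose k : ℝ) * F (n - k + 1) * G k)
        = (∑ k ∈ range (n + 1), (n.choose (k + 1) : ℝ) * F (n - k) * G (k + 1))
          + ((n + 1).choose 0 : ℝ) * F (n + 1 - 0) * G 0 := by
      rw [Finset.sum_range_succ (fun k => (n.choose (k + 1) : ℝ) * F (n - k) * G (k + 1)) n,
        Nat.choose_succ_self]
      push_cast
      rw [Finset.sum_range_succ' (fun k => (n.choose k : ℝ) * F (n - k + 1) * G k) n]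
      simp only [Nat.choose_zero_right, Nat.sub_zero, Nat.cast_one]
      have : ∀ k ∈ range n, (n.choose (k + 1) : ℝ) * F (n - (k + 1) + 1) * G (k + 1)
          = (n.choose (k + 1) : ℝ) * F (n - k) * G (k + 1) := by
        intro k hk
        rw [Finset.mem_range] at hk
        have h : n - (k + 1) + 1 = n - k := by omega
        rw [h]
      rw [Finset.sum_congr rfl this]
      ring
    rw [h2]
    ring

-- iterated derivative of (1 + w/x)^i
lemma my_pow_deriv (x : ℝ) (i : ℕ) (m : ℕ) :
    iteratedDeriv m (fun w : ℝ => (1 + w / x) ^ i) =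
      fun w => (i.descFactorial m : ℝ) * x⁻¹ ^ m * (1 + w / x) ^ (i - m) := by
  induction m with
  | zero => funext w; simp
  | succ m IH =>
    funext w
    rw [iteratedDeriv_succ, IH]
    have hu : HasDerivAt (fun w : ℝ => 1 + w / x) x⁻¹ w := by
      simpa using ((hasDerivAt_id w).div_const x).const_add 1
    have h : HasDerivAt (fun w : ℝ => (i.descFactorial m : ℝ) * x⁻¹ ^ m * (1 + w / x) ^ (i - m))
        ((i.descFactorial m : ℝ) * x⁻¹ ^ m *
          (((i - m : ℕ) : ℝ) * (1 + w / x) ^ (i - m - 1) * x⁻¹)) w :=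
      (hu.pow (i - m)).const_mul _
    rw [h.deriv, Nat.descFactorial_succ]
    have : i - (m + 1) = i - m - 1 := by omega
    rw [this]
    push_cast
    ring

-- iterated derivative of the gaussian-type factor
lemma my_gauss_deriv (x : ℝ) (k : ℕ) :
    iteratedDeriv k (fun w : ℝ => Real.exp (-(x * w) - w ^ 2 / 2)) 0 =
      (-1 : ℝ) ^ k * aeval x (Polynomial.hermite k) := by
  have hfun : (fun w : ℝ => Real.exp (-(x * w) - w ^ 2 / 2)) =
      fun w : ℝ => Real.exp (x ^ 2 / 2) * Real.exp (-((w + x) ^ 2 / 2)) := by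
    funext w
    rw [← Real.exp_add]
    ring_nf
  have hG : ContDiff ℝ ⊤ (fun y : ℝ => Real.exp (-(y ^ 2 / 2))) :=
    Real.contDiff_exp.comp (((contDiff_id.pow 2).div_const 2).neg)
  have hGshift : ContDiff ℝ ⊤ (fun w : ℝ => Real.exp (-((w + x) ^ 2 / 2))) :=
    hG.comp (contDiff_id.add contDiff_const)
  have hcm : iteratedDeriv k (fun w : ℝ => Real.exp (x ^ 2 / 2) * Real.exp (-((w + x) ^ 2 / 2)))
      = fun w => Real.exp (x ^ 2 / 2) * iteratedDeriv k (fun w : ℝ => Real.exp (-((w + x) ^ 2 / 2))) w := by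
    induction k with
    | zero => simp
    | succ k IH =>
      funext w
      rw [iteratedDeriv_succ, IH, deriv_const_mul _
        ((hGshift.differentiable_iteratedDeriv k
          (by exact_mod_cast lt_top_iff_ne_top.2 (by simp))) w), ← iteratedDeriv_succ]
  rw [hfun, hcm]
  have hshift := iteratedDeriv_comp_add_const k (fun y : ℝ => Real.exp (-(y ^ 2 / 2))) x
  simp only [hshift]
  rw [iteratedDeriv_eq_iterate, Polynomial.deriv_gaussian_eq_hermite_mul_gaussian]
  rw [zero_add, mul_comm, mul_assoc, ← Real.exp_add]
  simp

/-- the `d`-th derivative at `w = 0` of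
`g(w) = (1 + w/x)^i · exp(−xw − w²/2)` in terms of probabilists' Hermite polynomials and
falling factorials. -/
theorem deriv_weyl_generating_function (x : ℝ) (hx : x ≠ 0) (i d : ℕ) :
    iteratedDeriv d (fun w : ℝ => (1 + w / x) ^ i * Real.exp (-(x * w) - w ^ 2 / 2)) 0 =
      ∑ k ∈ Finset.range (d + 1),
        (-1 : ℝ) ^ k * (d.choose k) * (aeval x (Polynomial.hermite k)) *
          (Nat.descFactorial i (d - k)) * x ^ (-((d - k : ℕ) : ℤ)) := by
  have hf : ContDiff ℝ ⊤ (fun w : ℝ => (1 + w / x) ^ i) :=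
    (contDiff_const.add (contDiff_id.div_const x)).pow i
  have hg : ContDiff ℝ ⊤ (fun w : ℝ => Real.exp (-(x * w) - w ^ 2 / 2)) :=
    Real.contDiff_exp.comp
      (((contDiff_const.mul contDiff_id).neg).sub ((contDiff_id.pow 2).div_const 2))
  rw [my_leibniz _ _ hf hg d]
  refine Finset.sum_congr rfl fun k hk => ?_
  rw [my_pow_deriv x i (d - k), my_gauss_deriv x k]
  rw [zpow_neg, zpow_natCast, ← inv_pow]
  simp only [zero_div, add_zero, one_pow, mul_one]
  ring
end
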